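/- arXiv:2412.20712 — 10 statements merged into one kernel-verified Lean document; each statement's English description precedes it below -/
import Mathlib

section
/- Let n be a nonnegative integer, let ζ ∈ ℂ with ζ ≠ 0, and let A ∈ ℝ with A ≥ 1. Then min{ |ζ|^{−n}, A^n/n! } ≤ (3/2)·A^n/⟨ζ⟩^n, where ⟨ζ⟩ = (1+|ζ|²)^{1/2}. -/
private lemma exp45 : Real.exp (4/5) ≤ 9/4 := by
  have h4 : Real.exp (4/5) ^ (5:ℕ) = Real.exp 1 ^ (4:ℕ) := by
    rw [← Real.exp_nat_mul, ← Real.exp_nat_mul]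
    norm_num
  have h2 : Real.exp 1 < 2.7182818286 := Real.exp_one_lt_d9
  have h3 : Real.exp 1 ^ (4:ℕ) ≤ (2.7182818286:ℝ) ^ (4:ℕ) :=
    pow_le_pow_left₀ (Real.exp_pos 1).le h2.le 4
  have h5 : Real.exp (4/5) ^ (5:ℕ) ≤ (9/4:ℝ) ^ (5:ℕ) := by
    rw [h4]
    calc Real.exp 1 ^ (4:ℕ) ≤ (2.7182818286:ℝ) ^ (4:ℕ) := h3
      _ ≤ (9/4:ℝ) ^ (5:ℕ) := by norm_num
  exact le_of_pow_le_pow_left₀ (by norm_num) (by norm_num) h5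

private lemma case1 (n : ℕ) (hn : 1 ≤ n) {u : ℝ} (hu : 5*n/4 ≤ u) :
    (1+u)^n ≤ 9/4 * u^n := by
  have hn0 : (0:ℝ) < n := by exact_mod_cast hn
  have hu0 : 0 < u := lt_of_lt_of_le (by positivity) hu
  have h1 : (1+u) = u * (1 + 1/u) := by field_simp; ring
  have h2 : (1 + 1/u) ≤ Real.exp (1/u) := by
    have := Real.add_one_le_exp (1/u); linarith
  have h3 : (1+1/u)^n ≤ Real.exp (1/u)^n := pow_le_pow_left₀ (by positivity) h2 n
  have h4 : Real.exp (1/u)^n = Real.exp ((n:ℝ)/u) := by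
    rw [← Real.exp_nat_mul]; ring_nf
  have h5 : (n:ℝ)/u ≤ 4/5 := by
    rw [div_le_div_iff₀ hu0 (by norm_num)]; nlinarith
  have h6 : Real.exp ((n:ℝ)/u) ≤ 9/4 := le_trans (Real.exp_le_exp.2 h5) exp45
  calc (1+u)^n = u^n * (1+1/u)^n := by rw [h1, mul_pow]
    _ ≤ u^n * (9/4) := by
        have : (1+1/u)^n ≤ 9/4 := by rw [h4] at h3; linarith
        exact mul_le_mul_of_nonneg_left this (by positivity)
    _ = 9/4 * u^n := by ring

private lemma fact2 : ∀ n : ℕ, 5 ≤ n → (1 + 5*(n:ℝ)/4)^n ≤ 9/4 * ((n.factorial:ℝ))^2 := by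
  intro n hn
  induction n, hn using Nat.le_induction with
  | base => norm_num [Nat.factorial]
  | succ n hn ih =>
    have hn5 : (5:ℝ) ≤ n := by exact_mod_cast hn
    set a : ℝ := 1 + 5*(n:ℝ)/4 with ha
    have ha0 : (0:ℝ) < a := by positivity
    have key1 : (1 + 5*((n:ℕ)+1:ℝ)/4) = a + 5/4 := by rw [ha]; ring
    have hgoal : (1 + 5*(((n+1):ℕ):ℝ)/4) = a + 5/4 := by push_cast; rw [ha]; ring
    have h2 : a + 5/4 ≤ a * Real.exp (5/(4*a)) := by
      have he := Real.add_one_le_exp (5/(4*a))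
      have : a * (5/(4*a) + 1) = a + 5/4 := by field_simp; ring
      nlinarith
    have h3 : (a+5/4)^n ≤ a^n * Real.exp ((n:ℝ)*(5/(4*a))) := by
      calc (a+5/4)^n ≤ (a * Real.exp (5/(4*a)))^n :=
            pow_le_pow_left₀ (by positivity) h2 n
        _ = a^n * Real.exp (5/(4*a))^n := mul_pow _ _ _
        _ = a^n * Real.exp ((n:ℝ)*(5/(4*a))) := by rw [Real.exp_nat_mul]
    have h4 : (n:ℝ)*(5/(4*a)) ≤ 1 := by
      rw [ha, ← mul_div_assoc, div_le_one (by positivity : (0:ℝ) < 4*(1+5*(n:ℝ)/4))]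
      nlinarith
    have h4' : (n:ℝ)*(5/(4*a)) ≤ 1 := h4
    have h5 : Real.exp ((n:ℝ)*(5/(4*a))) ≤ 2.7182818286 := by
      calc Real.exp ((n:ℝ)*(5/(4*a))) ≤ Real.exp 1 := Real.exp_le_exp.2 h4'
        _ ≤ 2.7182818286 := Real.exp_one_lt_d9.le
    have hfact : (((n+1).factorial:ℝ)) = ((n:ℝ)+1) * (n.factorial:ℝ) := by
      rw [Nat.factorial_succ]; push_cast; ring
    have hfpos : (0:ℝ) < (n.factorial:ℝ) := by positivity
    have hexp0 : (0:ℝ) < Real.exp ((n:ℝ)*(5/(4*a))) := Real.exp_pos _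
    have step : (a+5/4)^(n+1) ≤ ((n:ℝ)+1)^2 * (a^n) := by
      calc (a+5/4)^(n+1) = (a+5/4) * (a+5/4)^n := by ring
        _ ≤ (a+5/4) * (a^n * Real.exp ((n:ℝ)*(5/(4*a)))) := by
            apply mul_le_mul_of_nonneg_left h3 (by positivity)
        _ = ((a+5/4) * Real.exp ((n:ℝ)*(5/(4*a)))) * a^n := by ring
        _ ≤ ((n:ℝ)+1)^2 * a^n := by
            apply mul_le_mul_of_nonneg_right _ (by positivity)
            nlinarith [hexp0]
    calc (1 + 5*(((n+1):ℕ):ℝ)/4)^(n+1) = (a+5/4)^(n+1) := by rw [hgoal]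
      _ ≤ ((n:ℝ)+1)^2 * (a^n) := step
      _ ≤ ((n:ℝ)+1)^2 * (9/4 * ((n.factorial:ℝ))^2) := by
          apply mul_le_mul_of_nonneg_left ih (by positivity)
      _ = 9/4 * (((n+1).factorial:ℝ))^2 := by rw [hfact]; ring

private lemma keylem (n : ℕ) (hn : 1 ≤ n) {u : ℝ} (hu : 0 < u) :
    (1+u)^n ≤ 9/4 * ((n.factorial:ℝ))^2 ∨ (1+u)^n ≤ 9/4 * u^n := by
  match n with
  | 1 =>
    rcases le_total u (5/4) with h | h
    · left; norm_num [Nat.factorial]; linarith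
    · right
      exact case1 1 le_rfl (by push_cast; linarith)
  | 2 =>
    rcases le_total u 2 with h | h
    · left; norm_num [Nat.factorial]; nlinarith
    · right; nlinarith [sq_nonneg (u-2)]
  | 3 =>
    rcases le_total u (13/4) with h | h
    · left
      calc (1+u)^3 ≤ (1+13/4)^3 := pow_le_pow_left₀ (by linarith) (by linarith) 3
        _ ≤ 9/4 * ((Nat.factorial 3:ℝ))^2 := by norm_num [Nat.factorial]
    · right
      have ht : 0 ≤ u - 13/4 := by linarith
      nlinarith [mul_nonneg ht ht, mul_nonneg (mul_nonneg ht ht) ht]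
  | 4 =>
    rcases le_total u (9/2) with h | h
    · left
      calc (1+u)^4 ≤ (1+9/2)^4 := pow_le_pow_left₀ (by linarith) (by linarith) 4
        _ ≤ 9/4 * ((Nat.factorial 4:ℝ))^2 := by norm_num [Nat.factorial]
    · right
      have ht : 0 ≤ u - 9/2 := by linarith
      nlinarith [mul_nonneg ht ht, mul_nonneg (mul_nonneg ht ht) ht,
        mul_nonneg (mul_nonneg (mul_nonneg ht ht) ht) ht]
  | (m+5) =>
    rcases le_total u (5*((m:ℝ)+5)/4) with h | h
    · left
      calc (1+u)^(m+5) ≤ (1 + 5*(((m+5):ℕ):ℝ)/4)^(m+5) := by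
            apply pow_le_pow_left₀ (by linarith) (by push_cast; linarith)
        _ ≤ 9/4 * (((m+5).factorial:ℝ))^2 := fact2 (m+5) (by omega)
    · right
      exact case1 (m+5) (by omega) (by push_cast; linarith)

/-- for `n ∈ ℕ`, `ζ ∈ ℂ∖{0}`, `A ≥ 1`,
`min{|ζ|^{−n}, A^n/n!} ≤ (3/2)·A^n/⟨ζ⟩^n` where `⟨ζ⟩ = (1+|ζ|²)^{1/2}`. -/
theorem stmt5 (n : ℕ) (ζ : ℂ) (hζ : ζ ≠ 0) (A : ℝ) (hA : 1 ≤ A) :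
    min ((‖ζ‖)⁻¹ ^ n) (A ^ n / n.factorial) ≤
      (3 / 2) * A ^ n / Real.sqrt (1 + ‖ζ‖ ^ 2) ^ n := by
  set r := ‖ζ‖ with hrdef
  have hr0 : 0 < r := by
    rw [hrdef]; exact norm_pos_iff.2 hζ
  have h1r : (0:ℝ) < 1 + r^2 := by positivity
  have hs0 : 0 < Real.sqrt (1 + r^2) := Real.sqrt_pos.2 h1r
  have hs2 : Real.sqrt (1 + r^2)^2 = 1 + r^2 := Real.sq_sqrt h1r.le
  have hAn : (1:ℝ) ≤ A^n := one_le_pow₀ hA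
  rcases Nat.eq_zero_or_pos n with rfl | hn
  · simp
    linarith
  · have hu : (0:ℝ) < r^2 := by positivity
    rcases keylem n hn hu with h | h
    · refine le_trans (min_le_right _ _) ?_
      have hf0 : (0:ℝ) < (n.factorial:ℝ) := by positivity
      rw [div_le_div_iff₀ hf0 (pow_pos hs0 n)]
      have hsn : Real.sqrt (1+r^2)^n ≤ 3/2 * (n.factorial:ℝ) := by
        apply le_of_pow_le_pow_left₀ two_ne_zero (by positivity)
        calc (Real.sqrt (1+r^2)^n)^2 = (Real.sqrt (1+r^2)^2)^n := by ring
          _ = (1+r^2)^n := by rw [hs2]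
          _ ≤ 9/4 * ((n.factorial:ℝ))^2 := h
          _ = (3/2 * (n.factorial:ℝ))^2 := by ring
      have hAn0 : (0:ℝ) < A^n := by positivity
      nlinarith
    · refine le_trans (min_le_left _ _) ?_
      have hsn : Real.sqrt (1+r^2)^n ≤ 3/2 * r^n := by
        apply le_of_pow_le_pow_left₀ two_ne_zero (by positivity)
        calc (Real.sqrt (1+r^2)^n)^2 = (Real.sqrt (1+r^2)^2)^n := by ring
          _ = (1+r^2)^n := by rw [hs2]
          _ ≤ 9/4 * (r^2)^n := h
          _ = (3/2 * r^n)^2 := by ring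
      rw [inv_pow, inv_eq_one_div, div_le_div_iff₀ (pow_pos hr0 n) (pow_pos hs0 n)]
      have hrn : (0:ℝ) < r^n := pow_pos hr0 n
      nlinarith
end

section
/- For every integer n ≥ 1 one has (1 + (n!)^{2/n})^{n/2} ≤ (3/2)·n!, i.e., the quantity ⟨(n!)^{1/n}⟩^n/n! is at most 3/2 for all n ≥ 1, where ⟨t⟩ = (1+t²)^{1/2} for t ∈ ℝ; moreover equality holds at n = 2. -/
lemma exp45_lt : Real.exp (4/5) < 9/4 := by
  have h1 : Real.exp (4/5) ^ 5 = Real.exp 4 := by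
    rw [← Real.exp_nat_mul]; norm_num
  have h2 : Real.exp 4 = Real.exp 1 ^ 4 := by
    rw [← Real.exp_nat_mul]; norm_num
  have h3 : Real.exp 1 < 2.7182818286 := Real.exp_one_lt_d9
  have h4 : Real.exp 1 ^ 4 < 2.7182818286 ^ 4 :=
    pow_lt_pow_left₀ h3 (Real.exp_pos 1).le (by norm_num)
  have h5 : Real.exp (4/5) ^ 5 < (9/4:ℝ) ^ 5 := by
    rw [h1, h2]; nlinarith
  exact lt_of_pow_lt_pow_left₀ 5 (by norm_num) h5

lemma fact_bound : ∀ n : ℕ, 5 ≤ n → ((5*n:ℝ)/4)^n ≤ ((n.factorial:ℝ))^2 := by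
  intro n hn
  induction n, hn using Nat.le_induction with
  | base => norm_num [Nat.factorial]
  | succ n hn ih =>
    have hn0 : (0:ℝ) < n := by positivity
    have hn5 : (5:ℝ) ≤ n := by exact_mod_cast hn
    have he : ((n+1:ℝ)/n)^n ≤ Real.exp 1 := by
      have h1 : (n+1:ℝ)/n = 1/n + 1 := by field_simp; ring
      calc ((n+1:ℝ)/n)^n ≤ Real.exp (1/n) ^ n := by
            apply pow_le_pow_left₀ (by positivity)
            rw [h1]; exact Real.add_one_le_exp _
        _ = Real.exp (n * (1/n)) := by rw [Real.exp_nat_mul]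
        _ = Real.exp 1 := by rw [mul_one_div, div_self hn0.ne']
    have he' : Real.exp 1 < 2.7182818286 := Real.exp_one_lt_d9
    have hsplit : ((5*((n:ℝ)+1))/4)^(n+1)
        = (5*((n:ℝ)+1)/4) * (((n+1:ℝ)/n)^n * ((5*n:ℝ)/4)^n) := by
      rw [← mul_pow, pow_succ]
      have : ((n+1:ℝ)/n) * ((5*n:ℝ)/4) = 5*((n:ℝ)+1)/4 := by field_simp
      rw [this]; ring
    have hfpos : (0:ℝ) < (n.factorial:ℝ) := by exact_mod_cast n.factorial_pos
    have hppos : (0:ℝ) < ((5*n:ℝ)/4)^n := by positivity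
    have hc : 5*((n:ℝ)+1)/4 * Real.exp 1 ≤ ((n:ℝ)+1)^2 := by
      nlinarith [mul_lt_mul_of_pos_left he' (show (0:ℝ) < ((n:ℝ)+1) by linarith),
        sq_nonneg ((n:ℝ)+1)]
    push_cast [Nat.factorial_succ]
    calc (5*((n:ℝ)+1)/4)^(n+1)
        = (5*((n:ℝ)+1)/4) * (((n+1:ℝ)/n)^n * ((5*n:ℝ)/4)^n) := hsplit
      _ ≤ (5*((n:ℝ)+1)/4) * (Real.exp 1 * ((n.factorial:ℝ))^2) := by
          apply mul_le_mul_of_nonneg_left _ (by positivity)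
          calc ((n+1:ℝ)/n)^n * ((5*n:ℝ)/4)^n ≤ Real.exp 1 * ((5*n:ℝ)/4)^n := by
                apply mul_le_mul_of_nonneg_right he hppos.le
            _ ≤ Real.exp 1 * ((n.factorial:ℝ))^2 := by
                apply mul_le_mul_of_nonneg_left ih (Real.exp_pos 1).le
      _ ≤ ((n:ℝ)+1)^2 * ((n.factorial:ℝ))^2 := by
          nlinarith [hc, sq_nonneg ((n.factorial:ℝ))]
      _ = (((n:ℝ)+1) * (n.factorial:ℝ))^2 := by ring

lemma key (n : ℕ) (hn : 1 ≤ n) (B : ℝ) (hB : 0 < B)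
    (hBn : B ^ n = ((n.factorial:ℝ))^2) : (1+B)^n ≤ 9/4 * B^n := by
  by_cases h5 : 5 ≤ n
  · -- large case
    have hfb := fact_bound n h5
    have hle : ((5*n:ℝ)/4) ≤ B := by
      apply le_of_pow_le_pow_left₀ (n := n) (by omega) hB.le
      rw [hBn]; exact hfb
    have hnB : (n:ℝ)/B ≤ 4/5 := by
      rw [div_le_div_iff₀ hB (by norm_num)]
      nlinarith
    have h1 : 1 + B ≤ B * Real.exp (1/B) := by
      have := Real.add_one_le_exp (1/B)
      have h2 : B * (1/B + 1) ≤ B * Real.exp (1/B) := by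
        apply mul_le_mul_of_nonneg_left this hB.le
      calc 1 + B = B * (1/B + 1) := by field_simp
        _ ≤ B * Real.exp (1/B) := h2
    calc (1+B)^n ≤ (B * Real.exp (1/B))^n := pow_le_pow_left₀ (by positivity) h1 n
      _ = B^n * Real.exp ((n:ℝ) * (1/B)) := by rw [mul_pow, Real.exp_nat_mul]
      _ = B^n * Real.exp ((n:ℝ)/B) := by rw [mul_one_div]
      _ ≤ B^n * Real.exp (4/5) := by
          apply mul_le_mul_of_nonneg_left (Real.exp_le_exp.mpr hnB) (by positivity)
      _ ≤ 9/4 * B^n := by nlinarith [exp45_lt, pow_pos hB n]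
  · interval_cases n
    · -- n = 1
      have h1 : B = 1 := by simpa [Nat.factorial] using hBn
      norm_num [h1]
    · -- n = 2
      have h2 : B^2 = 4 := by rw [hBn]; norm_num [Nat.factorial]
      nlinarith [sq_nonneg (B-2)]
    · -- n = 3
      have h3 : B^3 = 36 := by rw [hBn]; norm_num [Nat.factorial]
      have hub : B ≤ 84/25 := by
        apply le_of_pow_le_pow_left₀ (n := 3) (by norm_num) (by norm_num)
        rw [h3]; norm_num
      rw [h3]
      nlinarith [hB.le, sq_nonneg (84/25 - B), mul_nonneg hB.le hB.le]
    · -- n = 4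
      have h4 : B^4 = 576 := by rw [hBn]; norm_num [Nat.factorial]
      have hub : B ≤ 5 := by
        apply le_of_pow_le_pow_left₀ (n := 4) (by norm_num) (by norm_num)
        rw [h4]; norm_num
      rw [h4]
      nlinarith [hB.le, sq_nonneg (5 - B), mul_nonneg hB.le hB.le,
        mul_nonneg (mul_nonneg hB.le hB.le) hB.le]

theorem stmt6 :
    (∀ n : ℕ, 1 ≤ n →
      (1 + ((n.factorial : ℝ)) ^ ((2 : ℝ) / n)) ^ ((n : ℝ) / 2) ≤
        (3 / 2) * (n.factorial : ℝ)) ∧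
    (1 + ((Nat.factorial 2 : ℝ)) ^ ((2 : ℝ) / 2)) ^ ((2 : ℝ) / 2) =
      (3 / 2) * (Nat.factorial 2 : ℝ) := by
  constructor
  · intro n hn
    have hF0 : (0:ℝ) < (n.factorial:ℝ) := by exact_mod_cast n.factorial_pos
    have hnR : (n:ℝ) ≠ 0 := by
      simp only [ne_eq, Nat.cast_eq_zero]; omega
    set B := (n.factorial:ℝ) ^ ((2:ℝ)/n) with hBdef
    have hB : 0 < B := Real.rpow_pos_of_pos hF0 _
    have hBn : B ^ n = ((n.factorial:ℝ))^2 := by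
      rw [hBdef, ← Real.rpow_natCast ((n.factorial:ℝ) ^ ((2:ℝ)/n)) n,
        ← Real.rpow_mul hF0.le, div_mul_cancel₀ _ hnR,
        show (2:ℝ) = ((2:ℕ):ℝ) by norm_num, Real.rpow_natCast]
    have hkey := key n hn B hB hBn
    have h1B : (0:ℝ) ≤ 1 + B := by positivity
    have hb : (0:ℝ) ≤ 3/2 * (n.factorial:ℝ) := by positivity
    apply le_of_pow_le_pow_left₀ (n := 2) two_ne_zero hb
    have hL : ((1+B) ^ ((n:ℝ)/2)) ^ 2 = (1+B)^n := by
      rw [← Real.rpow_natCast ((1+B) ^ ((n:ℝ)/2)) 2, ← Real.rpow_mul h1B]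
      norm_num [Real.rpow_natCast]
    rw [hL]
    calc (1+B)^n ≤ 9/4 * B^n := hkey
      _ = (3/2 * (n.factorial:ℝ))^2 := by rw [hBn]; ring
  · rw [show (2:ℝ)/2 = 1 by norm_num, Real.rpow_one, Real.rpow_one]
    norm_num [Nat.factorial]
end

section
/- Let N ≥ 2 be an integer, α = exp(2πi/N), and ζ ∈ ℂ with ζ ≠ 0. Define h : ℝ → ℂ by h(x) = (i/N)·∑_{j=0}^{N−1} e^{iα^jζx}/(α^jζ)^{N−1}. Then for all x ≥ 0 one has |h(x)| ≤ (3/2)·⟨x⟩^{N−1}·⟨ζ⟩^{−(N−1)}·e^{|ζ|x}. -/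
open Complex Finset

set_option maxHeartbeats 1000000 in
/-- for `N ≥ 2`, `α = exp(2πi/N)`, `ζ ≠ 0`, and
`h(x) = (i/N)·∑_{j<N} e^{iα^jζx}/(α^jζ)^{N−1}`, one has
`|h(x)| ≤ (3/2)·⟨x⟩^{N−1}·⟨ζ⟩^{−(N−1)}·e^{|ζ|x}` for all `x ≥ 0`. -/
theorem stmt7 (N : ℕ) (hN : 2 ≤ N) (α ζ : ℂ)
    (hα : α = Complex.exp (2 * Real.pi * Complex.I / N)) (hζ : ζ ≠ 0)
    (h : ℝ → ℂ)
    (hh : ∀ x : ℝ, h x = (Complex.I / N) * ∑ j ∈ Finset.range N,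
      Complex.exp (Complex.I * α ^ j * ζ * x) / (α ^ j * ζ) ^ (N - 1))
    (x : ℝ) (hx : 0 ≤ x) :
    ‖h x‖ ≤
      (3 / 2) * Real.sqrt (1 + x ^ 2) ^ (N - 1)
        * (Real.sqrt (1 + ‖ζ‖ ^ 2) ^ (N - 1))⁻¹
        * Real.exp (‖ζ‖ * x) := by
  have hprim : IsPrimitiveRoot α N := hα ▸ Complex.isPrimitiveRoot_exp N (by omega)
  set M := N - 1 with hM
  set t := ‖ζ‖ with htdef
  have ht : 0 < t := norm_pos_iff.mpr hζ
  have hαne : α ≠ 0 := hprim.ne_zero (by omega)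
  have hα1 : ‖α‖ = 1 := by
    have h1 : ‖α‖ ^ N = 1 := by rw [← norm_pow, hprim.pow_eq_one, norm_one]
    by_contra hcon
    rcases lt_or_gt_of_ne hcon with hlt | hgt
    · have := pow_lt_one₀ (norm_nonneg α) hlt (by omega : N ≠ 0); linarith
    · have := one_lt_pow₀ hgt (by omega : N ≠ 0); linarith
  have habsαj : ∀ j : ℕ, ‖α ^ j‖ = 1 := by
    intro j; rw [norm_pow, hα1, one_pow]
  have hNR : (0:ℝ) < N := by positivity
  -- Bound A : |h x| ≤ exp(t x) / t^M
  have hterm : ∀ j : ℕ, ‖Complex.exp (Complex.I * α ^ j * ζ * x) / (α ^ j * ζ) ^ M‖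
      ≤ Real.exp (t * x) / t ^ M := by
    intro j
    rw [norm_div, Complex.norm_exp, norm_pow, norm_mul, habsαj j, one_mul]
    gcongr
    calc (Complex.I * α ^ j * ζ * x).re ≤ ‖Complex.I * α ^ j * ζ * x‖ :=
          Complex.re_le_norm _
      _ = t * x := by
          rw [norm_mul, norm_mul, norm_mul, Complex.norm_I, habsαj j, Complex.norm_real, Real.norm_eq_abs,
            _root_.abs_of_nonneg hx]
          ring
  have boundA : ‖h x‖ ≤ Real.exp (t * x) / t ^ M := by
    rw [hh x, norm_mul]
    have h1 : ‖Complex.I / (N:ℂ)‖ = 1 / N := by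
      rw [norm_div, Complex.norm_I, Complex.norm_natCast]
    rw [h1]
    calc 1 / (N:ℝ) * ‖∑ j ∈ Finset.range N,
            Complex.exp (Complex.I * α ^ j * ζ * x) / (α ^ j * ζ) ^ M‖
        ≤ 1 / N * ∑ j ∈ Finset.range N, ‖
            Complex.exp (Complex.I * α ^ j * ζ * x) / (α ^ j * ζ) ^ M‖ := by
          gcongr
          exact norm_sum_le _ _
      _ ≤ 1 / N * ∑ _j ∈ Finset.range N, Real.exp (t * x) / t ^ M := by
          gcongr with j hj
          exact hterm j
      _ = Real.exp (t * x) / t ^ M := by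
          rw [Finset.sum_const, Finset.card_range, nsmul_eq_mul]
          field_simp
  -- Series expansion
  set S : ℕ → ℂ := fun k => ∑ j ∈ Finset.range N, (α ^ ((k:ℤ) - (M:ℤ))) ^ j with hS
  set c : ℕ → ℂ := fun k =>
    (Complex.I / N) * ((Complex.I * ζ * x) ^ k / ((k.factorial : ℂ) * ζ ^ M)) * S k with hc
  have hsummable : ∀ j : ℕ, Summable (fun k : ℕ =>
      (Complex.I * α ^ j * ζ * (x:ℂ)) ^ k / (k.factorial : ℂ) / (α ^ j * ζ) ^ M) :=
    fun j => (NormedSpace.expSeries_div_summable (Complex.I * α ^ j * ζ * (x:ℂ))).div_const ((α ^ j * ζ) ^ M)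
  have key : ∀ j k : ℕ, (Complex.I * α ^ j * ζ * (x:ℂ)) ^ k / (k.factorial : ℂ) / (α ^ j * ζ) ^ M
      = ((Complex.I * ζ * x) ^ k / ((k.factorial : ℂ) * ζ ^ M))
        * (α ^ ((k:ℤ) - (M:ℤ))) ^ j := by
    intro j k
    have hz : (α ^ ((k:ℤ) - (M:ℤ))) ^ j = α ^ (j * k) / α ^ (j * M) := by
      rw [← zpow_natCast (α ^ ((k:ℤ) - (M:ℤ))) j, ← zpow_mul, sub_mul, zpow_sub₀ hαne,
        ← Nat.cast_mul, ← Nat.cast_mul, zpow_natCast, zpow_natCast, mul_comm k j, mul_comm M j, div_eq_mul_inv]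
    have e1 : (Complex.I * α ^ j * ζ * (x:ℂ)) ^ k = α ^ (j * k) * (Complex.I * ζ * x) ^ k := by
      rw [pow_mul]; ring
    have e2 : (α ^ j * ζ) ^ M = α ^ (j * M) * ζ ^ M := by
      rw [pow_mul]; ring
    rw [e1, e2, hz]
    ring
  have hx1 : h x = ∑' k : ℕ, c k := by
    rw [hh x]
    have hexp : ∀ j ∈ Finset.range N,
        Complex.exp (Complex.I * α ^ j * ζ * x) / (α ^ j * ζ) ^ M
        = ∑' k : ℕ, (Complex.I * α ^ j * ζ * (x:ℂ)) ^ k / (k.factorial : ℂ) / (α ^ j * ζ) ^ M := by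
      intro j _
      rw [Complex.exp_eq_exp_ℂ, NormedSpace.exp_eq_tsum_div, tsum_div_const]
    rw [Finset.sum_congr rfl hexp, ← Summable.tsum_finsetSum (fun j _ => hsummable j), ← tsum_mul_left]
    refine tsum_congr fun k => ?_
    rw [Finset.sum_congr rfl (fun j _ => key j k), ← Finset.mul_sum]
    simp only [hc, hS]
    ring
  -- S k = 0 for k < M
  have hSzero : ∀ k : ℕ, k < M → S k = 0 := by
    intro k hk
    have hne1 : α ^ ((k:ℤ) - (M:ℤ)) ≠ 1 := by
      intro hcon
      have hdvd : (N:ℤ) ∣ ((k:ℤ) - (M:ℤ)) := (hprim.zpow_eq_one_iff_dvd _).mp hcon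
      have h2 := Int.le_of_dvd (by omega) (dvd_neg.mpr hdvd)
      omega
    have hpow : (α ^ ((k:ℤ) - (M:ℤ))) ^ N = 1 := by
      rw [← zpow_natCast (α ^ ((k:ℤ) - (M:ℤ))) N, ← zpow_mul, mul_comm, zpow_mul,
        zpow_natCast, hprim.pow_eq_one, one_zpow]
    rw [hS]
    simp only
    rw [geom_sum_eq hne1, hpow, sub_self, zero_div]
  -- |S k| ≤ N
  have hSabs : ∀ k : ℕ, ‖S k‖ ≤ N := by
    intro k
    rw [hS]
    simp only
    calc ‖∑ j ∈ Finset.range N, (α ^ ((k:ℤ) - (M:ℤ))) ^ j‖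
        ≤ ∑ j ∈ Finset.range N, ‖(α ^ ((k:ℤ) - (M:ℤ))) ^ j‖ := norm_sum_le _ _
      _ = ∑ _j ∈ Finset.range N, (1:ℝ) := by
          refine Finset.sum_congr rfl fun j _ => ?_
          rw [norm_pow, norm_zpow, hα1, one_zpow, one_pow]
      _ = N := by simp
  -- the comparison series
  set b : ℕ → ℝ := fun k => if M ≤ k then x ^ M * (t * x) ^ (k - M) / (k - M).factorial else 0
    with hb
  have hbnonneg : ∀ k, 0 ≤ b k := by
    intro k
    rw [hb]
    simp only
    split <;> positivity
  have habs_c : ∀ k : ℕ, ‖c k‖ ≤ b k := by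
    intro k
    rcases lt_or_ge k M with hk | hk
    · rw [hc]
      simp only
      rw [hSzero k hk, mul_zero, norm_zero, hb]
      simp only
      rw [if_neg (by omega)]
    · have habs1 : ‖Complex.I / N * ((Complex.I * ζ * x) ^ k
          / ((k.factorial : ℂ) * ζ ^ M))‖ = 1 / N * ((t * x) ^ k / (k.factorial * t ^ M)) := by
        rw [norm_mul, norm_div, Complex.norm_I, Complex.norm_natCast, norm_div, norm_pow, norm_mul,
          norm_mul, Complex.norm_I, Complex.norm_real, Real.norm_eq_abs, _root_.abs_of_nonneg hx, norm_mul,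
          Complex.norm_natCast, norm_pow, one_mul]
      have hfact : ((k - M).factorial : ℝ) ≤ (k.factorial : ℝ) := by
        exact_mod_cast Nat.factorial_le (Nat.sub_le k M)
      have hsplit : (t * x) ^ k = (t ^ M * x ^ M) * (t * x) ^ (k - M) := by
        rw [← mul_pow, ← pow_add]
        congr 1
        omega
      calc ‖c k‖
          = 1 / N * ((t * x) ^ k / (k.factorial * t ^ M)) * ‖S k‖ := by
            rw [hc]; simp only; rw [norm_mul, habs1]
        _ ≤ 1 / N * ((t * x) ^ k / (k.factorial * t ^ M)) * N :=
            mul_le_mul_of_nonneg_left (hSabs k) (by positivity)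
        _ = (t * x) ^ k / (k.factorial * t ^ M) := by
            field_simp
        _ = x ^ M * (t * x) ^ (k - M) / k.factorial := by
            rw [hsplit]
            have h1 : (k.factorial : ℝ) ≠ 0 := by positivity
            have h2 : t ^ M ≠ 0 := by positivity
            field_simp
        _ ≤ x ^ M * (t * x) ^ (k - M) / (k - M).factorial :=
            div_le_div_of_nonneg_left (by positivity)
              (by exact_mod_cast (k - M).factorial_pos) hfact
        _ = b k := by rw [hb]; simp only; rw [if_pos hk]
  have hbshift : (fun i : ℕ => b (i + M)) = fun i : ℕ => x ^ M * ((t * x) ^ i / i.factorial) := by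
    funext i
    rw [hb]
    simp only
    rw [if_pos (by omega), Nat.add_sub_cancel, mul_div_assoc]
  have hbsum : Summable b := by
    rw [← summable_nat_add_iff M]
    rw [hbshift]
    exact (Real.summable_pow_div_factorial (t * x)).mul_left _
  have hcsum : Summable (fun k : ℕ => ‖c k‖) :=
    Summable.of_nonneg_of_le (fun k => norm_nonneg _) habs_c hbsum
  have htsum_b : ∑' k : ℕ, b k = x ^ M * Real.exp (t * x) := by
    have h0 := Summable.sum_add_tsum_nat_add (f := b) M hbsum
    have hzero : ∑ i ∈ Finset.range M, b i = 0 := by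
      refine Finset.sum_eq_zero fun i hi => ?_
      rw [hb]
      simp only
      rw [if_neg (by simp at hi; omega)]
    have hexp2 : ∑' i : ℕ, (t * x) ^ i / (i.factorial : ℝ) = Real.exp (t * x) := by
      rw [Real.exp_eq_exp_ℝ, NormedSpace.exp_eq_tsum_div]
    rw [← h0, hzero, zero_add, hbshift, tsum_mul_left, hexp2]
  have boundB : ‖h x‖ ≤ x ^ M * Real.exp (t * x) := by
    rw [hx1]
    calc ‖∑' k : ℕ, c k‖ ≤ ∑' k : ℕ, ‖c k‖ := by
          have := norm_tsum_le_tsum_norm (f := c) (by simpa using hcsum)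
          simpa using this
      _ ≤ ∑' k : ℕ, b k := Summable.tsum_le_tsum habs_c hcsum hbsum
      _ = x ^ M * Real.exp (t * x) := htsum_b
  -- final combination
  set s := Real.sqrt (1 + x ^ 2) with hsdef
  set u := Real.sqrt (1 + t ^ 2) with hudef
  have hs0 : 0 < s := Real.sqrt_pos.mpr (by positivity)
  have hu0 : 0 < u := Real.sqrt_pos.mpr (by positivity)
  have hs2 : s ^ 2 = 1 + x ^ 2 := Real.sq_sqrt (by positivity)
  have hu2 : u ^ 2 = 1 + t ^ 2 := Real.sq_sqrt (by positivity)
  have hexp0 : 0 < Real.exp (t * x) := Real.exp_pos _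
  rcases le_total (t * x) 1 with hcase | hcase
  · -- use boundB
    have hxu : x * u ≤ s := by
      have h2 : (x * u) ^ 2 ≤ s ^ 2 := by
        rw [mul_pow, hu2, hs2]
        nlinarith [mul_nonneg ht.le hx]
      calc x * u = Real.sqrt ((x * u) ^ 2) := (Real.sqrt_sq (by positivity)).symm
        _ ≤ Real.sqrt (s ^ 2) := Real.sqrt_le_sqrt h2
        _ = s := Real.sqrt_sq hs0.le
    have hxM : x ^ M ≤ s ^ M * (u ^ M)⁻¹ := by
      have hxsu : x ≤ s / u := (le_div_iff₀ hu0).mpr hxu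
      calc x ^ M ≤ (s / u) ^ M := pow_le_pow_left₀ hx hxsu M
        _ = s ^ M * (u ^ M)⁻¹ := by rw [div_pow, div_eq_mul_inv]
    calc ‖h x‖ ≤ x ^ M * Real.exp (t * x) := boundB
      _ ≤ (s ^ M * (u ^ M)⁻¹) * Real.exp (t * x) := by gcongr
      _ ≤ (3 / 2) * ((s ^ M * (u ^ M)⁻¹) * Real.exp (t * x)) := by
          nlinarith [mul_pos (mul_pos (pow_pos hs0 M) (inv_pos.mpr (pow_pos hu0 M))) hexp0]
      _ = 3 / 2 * s ^ M * (u ^ M)⁻¹ * Real.exp (t * x) := by ring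
  · -- use boundA
    have hus : u ≤ s * t := by
      have h2 : u ^ 2 ≤ (s * t) ^ 2 := by
        rw [mul_pow, hu2, hs2]
        nlinarith [mul_nonneg ht.le hx]
      calc u = Real.sqrt (u ^ 2) := (Real.sqrt_sq hu0.le).symm
        _ ≤ Real.sqrt ((s * t) ^ 2) := Real.sqrt_le_sqrt h2
        _ = s * t := Real.sqrt_sq (by positivity)
    have huM : u ^ M ≤ s ^ M * t ^ M := by
      calc u ^ M ≤ (s * t) ^ M := pow_le_pow_left₀ hu0.le hus M
        _ = s ^ M * t ^ M := mul_pow s t M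
    calc ‖h x‖ ≤ Real.exp (t * x) / t ^ M := boundA
      _ = s ^ M * (s ^ M * t ^ M)⁻¹ * Real.exp (t * x) := by
          have : s ^ M ≠ 0 := by positivity
          field_simp
      _ ≤ s ^ M * (u ^ M)⁻¹ * Real.exp (t * x) :=
          mul_le_mul_of_nonneg_right
            (mul_le_mul_of_nonneg_left (inv_anti₀ (pow_pos hu0 M) huM)
              (by positivity)) hexp0.le
      _ ≤ 3 / 2 * s ^ M * (u ^ M)⁻¹ * Real.exp (t * x) := by
          nlinarith [mul_pos (mul_pos (pow_pos hs0 M) (inv_pos.mpr (pow_pos hu0 M))) hexp0]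
end

section
/- Let N ≥ 2 be an integer, α = exp(2πi/N), and ζ ∈ ℂ with ζ ≠ 0. Define h : ℝ → ℂ by h(x) = (i/N)·∑_{j=0}^{N−1} e^{iα^jζx}/(α^jζ)^{N−1}. Then for every integer k with 0 ≤ k ≤ N−1 and every x ≥ 0 one has |h^(k)(x)| ≤ x^{N−k−1}/(N−k−1)! + (3/2)·|ζ|^{k+1}·⟨x⟩^N·⟨ζ⟩^{−N}·e^{|ζ|x}, where h^(k) denotes the k-th derivative of h. -/
open Complex Finset

lemma iter_exp_sum (s : Finset ℕ) (b c : ℕ → ℂ) (k : ℕ) :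
    iteratedDeriv k (fun x : ℝ => ∑ j ∈ s, c j * Complex.exp (b j * x)) =
      fun x : ℝ => ∑ j ∈ s, c j * (b j) ^ k * Complex.exp (b j * x) := by
  induction k with
  | zero => simp
  | succ k ih =>
    rw [iteratedDeriv_succ, ih]
    funext x
    have hd : ∀ j ∈ s, HasDerivAt (fun x : ℝ => c j * (b j) ^ k * Complex.exp (b j * x))
        (c j * (b j) ^ (k + 1) * Complex.exp (b j * x)) x := by
      intro j _
      have h1 : HasDerivAt (fun x : ℝ => (x : ℂ)) 1 x := by
        simpa using (hasDerivAt_id x).ofReal_comp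
      have h2 := (h1.const_mul (b j)).cexp
      have h3 := h2.const_mul (c j * (b j) ^ k)
      exact h3.congr_deriv (by ring)
    exact (HasDerivAt.fun_sum hd).deriv


set_option maxHeartbeats 1600000 in
/-- with `h` as in Statement 7, for every `0 ≤ k ≤ N−1` and `x ≥ 0`,
`|h^{(k)}(x)| ≤ x^{N−k−1}/(N−k−1)! + (3/2)·|ζ|^{k+1}·⟨x⟩^N·⟨ζ⟩^{−N}·e^{|ζ|x}`. -/
theorem stmt8 (N : ℕ) (hN : 2 ≤ N) (α ζ : ℂ)
    (hα : α = Complex.exp (2 * Real.pi * Complex.I / N)) (hζ : ζ ≠ 0)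
    (h : ℝ → ℂ)
    (hh : ∀ x : ℝ, h x = (Complex.I / N) * ∑ j ∈ Finset.range N,
      Complex.exp (Complex.I * α ^ j * ζ * x) / (α ^ j * ζ) ^ (N - 1))
    (k : ℕ) (hk : k ≤ N - 1) (x : ℝ) (hx : 0 ≤ x) :
    ‖iteratedDeriv k h x‖ ≤
      x ^ (N - k - 1) / (N - k - 1).factorial
        + (3 / 2) * ‖ζ‖ ^ (k + 1) * Real.sqrt (1 + x ^ 2) ^ N
          * (Real.sqrt (1 + ‖ζ‖ ^ 2) ^ N)⁻¹
          * Real.exp (‖ζ‖ * x) := by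
  have hN0 : (N : ℂ) ≠ 0 := Nat.cast_ne_zero.mpr (by omega)
  have hρ : IsPrimitiveRoot α N := by
    rw [hα]; exact Complex.isPrimitiveRoot_exp N (by omega)
  have hαN : α ^ N = 1 := hρ.pow_eq_one
  have hα0 : α ≠ 0 := fun h0 => by simp [h0, zero_pow (by omega : N ≠ 0)] at hαN
  have habsα : ‖α‖ = 1 := by
    have h1 : ‖α‖ ^ N = 1 := by rw [← norm_pow, hαN, norm_one]
    rcases lt_trichotomy (‖α‖) 1 with hl | he | hg
    · exact absurd h1 (by nlinarith [pow_lt_one₀ (norm_nonneg α) hl (by omega : N ≠ 0)])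
    · exact he
    · exact absurd h1 (by nlinarith [one_lt_pow₀ hg (by omega : N ≠ 0)])
  set z := ‖ζ‖ with hz
  have hz0 : 0 < z := norm_pos_iff.mpr hζ
  set d := N - k - 1 with hd
  have hkd : k + 1 + d = N := by omega
  have hkd' : k + d = N - 1 := by omega
  set p := d + N with hp
  have hDformula : iteratedDeriv k h = fun x : ℝ => ∑ j ∈ range N,
      ((Complex.I / N) / (α ^ j * ζ) ^ (N - 1)) * (Complex.I * α ^ j * ζ) ^ k *
        Complex.exp ((Complex.I * α ^ j * ζ) * x) := by
    have hform : h = fun x : ℝ => ∑ j ∈ range N,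
        ((Complex.I / N) / (α ^ j * ζ) ^ (N - 1)) * Complex.exp ((Complex.I * α ^ j * ζ) * x) := by
      funext y
      rw [hh y, Finset.mul_sum]
      exact Finset.sum_congr rfl fun j _ => by ring
    rw [hform, iter_exp_sum]
  -- per-exponential facts
  have habsαj : ∀ j : ℕ, ‖α ^ j‖ = 1 := fun j => by
    rw [norm_pow, habsα, one_pow]
  have habsw : ∀ j : ℕ, ‖Complex.I * α ^ j * ζ * x‖ = z * x := by
    intro j
    rw [norm_mul, norm_mul, norm_mul, Complex.norm_I, habsαj, Complex.norm_of_nonneg hx]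
    ring
  have habsExp : ∀ j : ℕ, ‖Complex.exp ((Complex.I * α ^ j * ζ) * x)‖ ≤
      Real.exp (z * x) := by
    intro j
    rw [Complex.norm_exp]
    apply Real.exp_le_exp.mpr
    calc ((Complex.I * α ^ j * ζ) * x).re ≤ ‖(Complex.I * α ^ j * ζ) * x‖ :=
          Complex.re_le_norm _
      _ = z * x := habsw j
  -- common sqrt facts
  set SX := Real.sqrt (1 + x ^ 2) with hSX
  set SZ := Real.sqrt (1 + z ^ 2) with hSZ
  have hSX2 : SX ^ 2 = 1 + x ^ 2 := Real.sq_sqrt (by positivity)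
  have hSZ2 : SZ ^ 2 = 1 + z ^ 2 := Real.sq_sqrt (by positivity)
  have hSX0 : 0 < SX := Real.sqrt_pos.mpr (by positivity)
  have hSZ0 : 0 < SZ := Real.sqrt_pos.mpr (by positivity)
  have hE0 : (0:ℝ) < Real.exp (z * x) := Real.exp_pos _
  have hfac : (0:ℝ) < (d.factorial : ℝ) := by positivity
  rcases le_or_gt 1 (z * x) with hcase | hcase
  · -- Case A : crude bound
    have hterm : ∀ j ∈ range N, ‖
        (Complex.I / N) / (α ^ j * ζ) ^ (N - 1) * (Complex.I * α ^ j * ζ) ^ k *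
          Complex.exp ((Complex.I * α ^ j * ζ) * x)‖ ≤
        (1 / N) * (z ^ k / z ^ (N - 1)) * Real.exp (z * x) := by
      intro j _
      rw [norm_mul, norm_mul, norm_div, norm_div, norm_pow, norm_pow, norm_mul, norm_mul, norm_mul,
        Complex.norm_I, habsαj, Complex.norm_natCast]
      simp only [one_mul]
      calc 1 / (N:ℝ) / ‖ζ‖ ^ (N - 1) * ‖ζ‖ ^ k *
            ‖Complex.exp (Complex.I * α ^ j * ζ * x)‖
          = 1 / (N:ℝ) * (z ^ k / z ^ (N - 1)) *
            ‖Complex.exp (Complex.I * α ^ j * ζ * x)‖ := by rw [hz]; ring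
        _ ≤ 1 / (N:ℝ) * (z ^ k / z ^ (N - 1)) * Real.exp (z * x) := by
            gcongr
            all_goals first | positivity | exact habsExp j
    have hbound : ‖iteratedDeriv k h x‖ ≤ z ^ k / z ^ (N - 1) * Real.exp (z * x) := by
      rw [hDformula]
      calc ‖∑ j ∈ range N, _‖ ≤ ∑ j ∈ range N, _ := norm_sum_le _ _
        _ ≤ ∑ j ∈ range N, (1 / N) * (z ^ k / z ^ (N - 1)) * Real.exp (z * x) :=
            Finset.sum_le_sum hterm
        _ = z ^ k / z ^ (N - 1) * Real.exp (z * x) := by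
            rw [Finset.sum_const, card_range, nsmul_eq_mul]
            field_simp
    have hzz : z ^ k / z ^ (N - 1) = z ^ (k + 1) / z ^ N := by
      rw [div_eq_div_iff (by positivity) (by positivity), ← pow_add, ← pow_add]
      congr 1; omega
    have hkey : SZ ≤ z * SX := by
      have h2 : z * SX = Real.sqrt (z ^ 2 * (1 + x ^ 2)) := by
        rw [Real.sqrt_mul (sq_nonneg z), Real.sqrt_sq hz0.le]
      rw [h2]
      apply Real.sqrt_le_sqrt
      nlinarith
    have hkeyN : SZ ^ N ≤ z ^ N * SX ^ N := by
      rw [← mul_pow]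
      exact pow_le_pow_left₀ hSZ0.le hkey N
    have hfinal : z ^ (k + 1) / z ^ N ≤ (3 / 2) * z ^ (k + 1) * SX ^ N * (SZ ^ N)⁻¹ := by
      rw [div_le_iff₀ (by positivity)]
      have h5 : z ^ (k + 1) ≤ z ^ (k + 1) * ((SZ ^ N)⁻¹ * (z ^ N * SX ^ N)) := by
        calc z ^ (k + 1) = z ^ (k + 1) * ((SZ ^ N)⁻¹ * SZ ^ N) := by
              rw [inv_mul_cancel₀ (by positivity : (SZ ^ N : ℝ) ≠ 0), mul_one]
          _ ≤ _ := by gcongr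
      nlinarith [h5, pow_pos hz0 (k + 1)]
    have hx0 : (0:ℝ) ≤ x ^ d / d.factorial := by positivity
    calc ‖iteratedDeriv k h x‖ ≤ z ^ k / z ^ (N - 1) * Real.exp (z * x) := hbound
      _ = z ^ (k + 1) / z ^ N * Real.exp (z * x) := by rw [hzz]
      _ ≤ (3 / 2) * z ^ (k + 1) * SX ^ N * (SZ ^ N)⁻¹ * Real.exp (z * x) := by
          gcongr
      _ ≤ x ^ d / d.factorial + (3 / 2) * z ^ (k + 1) * SX ^ N * (SZ ^ N)⁻¹ *
            Real.exp (z * x) := by linarith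
  · -- Case B : Taylor expansion
    set c' : ℂ := Complex.I ^ (k + 1) * ζ ^ k / (N * ζ ^ (N - 1)) with hc'
    have hcoeff : ∀ j ∈ range N, (Complex.I / N) / (α ^ j * ζ) ^ (N - 1) *
        (Complex.I * α ^ j * ζ) ^ k = c' * (α ^ (k + 1)) ^ j := by
      intro j _
      have hu : (α ^ j) ^ (N - 1) * α ^ j = 1 := by
        rw [← pow_succ]
        have hNs : N - 1 + 1 = N := by omega
        rw [hNs, ← pow_mul, mul_comm, pow_mul, hαN, one_pow]
      have hinv : ((α ^ j) ^ (N - 1))⁻¹ = α ^ j := inv_eq_of_mul_eq_one_right hu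
      have hpr : (α ^ (k + 1)) ^ j = (α ^ j) ^ (k + 1) := by
        rw [← pow_mul, ← pow_mul, Nat.mul_comm]
      rw [hpr, hc', mul_pow (α ^ j) ζ, mul_pow, mul_pow, div_div, div_eq_mul_inv,
        div_eq_mul_inv, mul_inv, mul_inv, mul_inv, hinv]
      ring
    have hD2 : iteratedDeriv k h x = c' * ∑ j ∈ range N,
        (α ^ (k + 1)) ^ j * Complex.exp ((Complex.I * α ^ j * ζ) * x) := by
      rw [hDformula, Finset.mul_sum]
      exact Finset.sum_congr rfl fun j hj => by rw [hcoeff j hj, mul_assoc]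
    have hinner : ∀ n ∈ range p, ∑ j ∈ range N, (α ^ (k + 1 + n)) ^ j =
        if n = d then (N : ℂ) else 0 := by
      intro n hn
      have hnp : n < p := Finset.mem_range.mp hn
      by_cases hnd : n = d
      · subst hnd
        rw [if_pos rfl, hkd, hαN]
        simp
      · rw [if_neg hnd]
        have hr1 : α ^ (k + 1 + n) ≠ 1 := by
          intro h1
          obtain ⟨m, hm⟩ := (hρ.pow_eq_one_iff_dvd (k + 1 + n)).mp h1
          have hub : k + 1 + n < 2 * N := by omega
          have hm1 : m = 1 := by
            rcases Nat.lt_or_ge m 2 with hl | hg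
            · interval_cases m <;> omega
            · have := Nat.mul_le_mul_left N hg; omega
          rw [hm1, mul_one] at hm
          exact hnd (by omega)
        rw [geom_sum_eq hr1]
        have hrN : (α ^ (k + 1 + n)) ^ N = 1 := by
          rw [← pow_mul, mul_comm, pow_mul, hαN, one_pow]
        rw [hrN]
        simp
    have hkeysum : ∑ j ∈ range N, (α ^ (k + 1)) ^ j *
        ∑ n ∈ range p, (Complex.I * α ^ j * ζ * x) ^ n / n.factorial =
        N * ((Complex.I * ζ * x) ^ d / d.factorial) := by
      calc ∑ j ∈ range N, (α ^ (k + 1)) ^ j *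
            ∑ n ∈ range p, (Complex.I * α ^ j * ζ * x) ^ n / n.factorial
          = ∑ j ∈ range N, ∑ n ∈ range p,
            (α ^ (k + 1 + n)) ^ j * ((Complex.I * ζ * x) ^ n / n.factorial) := by
            refine Finset.sum_congr rfl fun j _ => ?_
            rw [Finset.mul_sum]
            refine Finset.sum_congr rfl fun n _ => ?_
            have hw : (Complex.I * α ^ j * ζ * x) = α ^ j * (Complex.I * ζ * x) := by ring
            rw [hw, mul_pow, pow_right_comm, pow_add α (k + 1) n, mul_pow]
            ring
        _ = ∑ n ∈ range p, ∑ j ∈ range N,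
            (α ^ (k + 1 + n)) ^ j * ((Complex.I * ζ * x) ^ n / n.factorial) := Finset.sum_comm
        _ = ∑ n ∈ range p, (∑ j ∈ range N, (α ^ (k + 1 + n)) ^ j) *
            ((Complex.I * ζ * x) ^ n / n.factorial) := by
            exact Finset.sum_congr rfl fun n _ => (Finset.sum_mul _ _ _).symm
        _ = ∑ n ∈ range p, (if n = d then (N : ℂ) else 0) *
            ((Complex.I * ζ * x) ^ n / n.factorial) := by
            exact Finset.sum_congr rfl fun n hn => by rw [hinner n hn]
        _ = N * ((Complex.I * ζ * x) ^ d / d.factorial) := by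
            simp only [ite_mul, zero_mul]
            rw [Finset.sum_ite_eq' (range p) d]
            simp [Finset.mem_range, show d < p by omega]
    have hsplit : iteratedDeriv k h x = c' * (N * ((Complex.I * ζ * x) ^ d / d.factorial)) +
        c' * ∑ j ∈ range N, (α ^ (k + 1)) ^ j *
          (Complex.exp ((Complex.I * α ^ j * ζ) * x) -
            ∑ n ∈ range p, (Complex.I * α ^ j * ζ * x) ^ n / n.factorial) := by
      rw [hD2, ← hkeysum, ← mul_add, ← Finset.sum_add_distrib]
      congr 1
      exact Finset.sum_congr rfl fun j _ => by ring
    have hmain : c' * (N * ((Complex.I * ζ * x) ^ d / d.factorial)) =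
        Complex.I ^ N * (x : ℂ) ^ d / d.factorial := by
      have hζk : ζ ^ k * ζ ^ d = ζ ^ (N - 1) := by rw [← pow_add, hkd']
      have hIk : Complex.I ^ (k + 1) * Complex.I ^ d = Complex.I ^ N := by
        rw [← pow_add, hkd]
      calc c' * (N * ((Complex.I * ζ * x) ^ d / d.factorial))
          = (Complex.I ^ (k + 1) * Complex.I ^ d) * ((ζ ^ k * ζ ^ d) / ζ ^ (N - 1)) *
            ((N : ℂ) / (N : ℂ)) * ((x : ℂ) ^ d / d.factorial) := by
            rw [hc']; ring
        _ = Complex.I ^ N * (x : ℂ) ^ d / d.factorial := by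
            rw [hIk, hζk, div_self hN0, div_self (pow_ne_zero (N - 1) hζ)]; ring
    have habsmain : ‖Complex.I ^ N * (x : ℂ) ^ d / d.factorial‖ =
        x ^ d / d.factorial := by
      rw [norm_div, norm_mul, norm_pow, norm_pow, Complex.norm_I, one_pow, one_mul,
        Complex.norm_of_nonneg hx, Complex.norm_natCast]
    -- remainder bound
    have hp0 : 0 < p := by omega
    have habsc' : ‖c'‖ = z ^ k / (N * z ^ (N - 1)) := by
      rw [hc', norm_div, norm_mul, norm_mul, norm_pow, norm_pow, norm_pow, Complex.norm_I,
        one_pow, Complex.norm_natCast, one_mul, hz]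
    have hremterm : ∀ j ∈ range N, ‖(α ^ (k + 1)) ^ j *
        (Complex.exp ((Complex.I * α ^ j * ζ) * x) -
          ∑ n ∈ range p, (Complex.I * α ^ j * ζ * x) ^ n / n.factorial)‖ ≤
        (z * x) ^ p * ((p + 1 : ℝ) * ((p.factorial : ℝ) * p)⁻¹) := by
      intro j _
      rw [norm_mul, norm_pow, norm_pow, habsα, one_pow, one_pow, one_mul]
      have hb := Complex.exp_bound (x := Complex.I * α ^ j * ζ * x)
        (by rw [habsw j]; exact hcase.le) hp0
      rw [habsw j] at hb
      refine hb.trans_eq ?_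
      push_cast
      ring
    have hrem : ‖c' * ∑ j ∈ range N, (α ^ (k + 1)) ^ j *
        (Complex.exp ((Complex.I * α ^ j * ζ) * x) -
          ∑ n ∈ range p, (Complex.I * α ^ j * ζ * x) ^ n / n.factorial)‖ ≤
        z ^ k / (N * z ^ (N - 1)) * (N * ((z * x) ^ p * ((p + 1 : ℝ) *
          ((p.factorial : ℝ) * p)⁻¹))) := by
      rw [norm_mul, habsc']
      gcongr
      calc ‖∑ j ∈ range N, _‖ ≤ ∑ j ∈ range N, _ := norm_sum_le _ _
        _ ≤ ∑ j ∈ range N, (z * x) ^ p * ((p + 1 : ℝ) * ((p.factorial : ℝ) * p)⁻¹) :=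
            Finset.sum_le_sum hremterm
        _ = N * ((z * x) ^ p * ((p + 1 : ℝ) * ((p.factorial : ℝ) * p)⁻¹)) := by
            rw [Finset.sum_const, card_range, nsmul_eq_mul]
    -- arithmetic clean-up
    have hQ : (p + 1 : ℝ) * ((p.factorial : ℝ) * p)⁻¹ ≤ 1 := by
      have hp2 : 2 ≤ p := by omega
      have hf2 : 2 ≤ p.factorial := le_trans hp2 (Nat.self_le_factorial p)
      have hnat : p + 1 ≤ p.factorial * p := by nlinarith
      have hpos : (0:ℝ) < (p.factorial : ℝ) * p := by positivity
      rw [← div_eq_mul_inv, div_le_one hpos]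
      exact_mod_cast hnat
    have hQ0 : (0:ℝ) ≤ (p + 1 : ℝ) * ((p.factorial : ℝ) * p)⁻¹ := by positivity
    have hzsplit : z ^ k * z ^ p = z ^ N * z ^ (N - 1) := by
      rw [← pow_add, ← pow_add]; congr 1; omega
    have hsimp : z ^ k / (N * z ^ (N - 1)) * (N * ((z * x) ^ p *
        ((p + 1 : ℝ) * ((p.factorial : ℝ) * p)⁻¹))) =
        z ^ N * x ^ p * ((p + 1 : ℝ) * ((p.factorial : ℝ) * p)⁻¹) := by
      rw [mul_pow, div_mul_eq_mul_div, div_eq_iff (by positivity : ((N:ℝ) * z ^ (N - 1)) ≠ 0)]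
      calc z ^ k * (N * (z ^ p * x ^ p * ((p + 1 : ℝ) * ((p.factorial : ℝ) * p)⁻¹)))
          = (z ^ k * z ^ p) * x ^ p * ((p + 1 : ℝ) * ((p.factorial : ℝ) * p)⁻¹) * N := by
            ring
        _ = z ^ N * x ^ p * ((p + 1 : ℝ) * ((p.factorial : ℝ) * p)⁻¹) *
            ((N : ℝ) * z ^ (N - 1)) := by rw [hzsplit]; ring
    have hxppow : z ^ N * x ^ p = z ^ (k + 1) * (z * x) ^ d * x ^ N := by
      rw [mul_pow]
      rw [show z ^ (k + 1) * (z ^ d * x ^ d) * x ^ N =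
        (z ^ (k + 1) * z ^ d) * (x ^ d * x ^ N) by ring, ← pow_add, ← pow_add, hkd, ← hp]
    have hcore : z ^ N * x ^ p * ((p + 1 : ℝ) * ((p.factorial : ℝ) * p)⁻¹) ≤
        z ^ (k + 1) * x ^ N := by
      have hxzd : (z * x) ^ d ≤ 1 :=
        pow_le_one₀ (mul_nonneg hz0.le hx) hcase.le
      rw [hxppow]
      calc z ^ (k + 1) * (z * x) ^ d * x ^ N * ((p + 1 : ℝ) * ((p.factorial : ℝ) * p)⁻¹)
          ≤ z ^ (k + 1) * 1 * x ^ N * 1 := by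
            gcongr
            all_goals first | positivity | exact hxzd | exact hQ
        _ = z ^ (k + 1) * x ^ N := by ring
    have hxN : x ^ N ≤ SX ^ N * (SZ ^ N)⁻¹ := by
      have hxSZ : x * SZ ≤ SX := by
        have h1 : x * SZ = Real.sqrt (x ^ 2 * (1 + z ^ 2)) := by
          rw [Real.sqrt_mul (sq_nonneg x), Real.sqrt_sq hx]
        rw [h1, hSX]
        apply Real.sqrt_le_sqrt
        nlinarith [mul_nonneg hz0.le hx]
      have h2 : x ^ N * SZ ^ N ≤ SX ^ N := by
        rw [← mul_pow]
        exact pow_le_pow_left₀ (mul_nonneg hx hSZ0.le) hxSZ N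
      rw [← div_eq_mul_inv, le_div_iff₀ (pow_pos hSZ0 N)]
      exact h2
    have hE1 : (1:ℝ) ≤ Real.exp (z * x) := Real.one_le_exp (by positivity)
    have hremfinal : ‖c' * ∑ j ∈ range N, (α ^ (k + 1)) ^ j *
        (Complex.exp ((Complex.I * α ^ j * ζ) * x) -
          ∑ n ∈ range p, (Complex.I * α ^ j * ζ * x) ^ n / n.factorial)‖ ≤
        (3 / 2) * z ^ (k + 1) * SX ^ N * (SZ ^ N)⁻¹ * Real.exp (z * x) := by
      refine hrem.trans ?_
      rw [hsimp]
      refine hcore.trans ?_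
      calc z ^ (k + 1) * x ^ N ≤ z ^ (k + 1) * (SX ^ N * (SZ ^ N)⁻¹) := by
            gcongr
            all_goals first | positivity | exact hxN
        _ ≤ (3 / 2) * z ^ (k + 1) * SX ^ N * (SZ ^ N)⁻¹ * Real.exp (z * x) := by
            nlinarith [mul_pos (mul_pos (pow_pos hz0 (k + 1)) (pow_pos hSX0 N))
              (inv_pos.mpr (pow_pos hSZ0 N)), pow_pos hz0 (k + 1), pow_pos hSX0 N,
              inv_pos.mpr (pow_pos hSZ0 N)]
    calc ‖iteratedDeriv k h x‖
        ≤ ‖c' * (N * ((Complex.I * ζ * x) ^ d / d.factorial))‖ +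
          ‖c' * ∑ j ∈ range N, (α ^ (k + 1)) ^ j *
            (Complex.exp ((Complex.I * α ^ j * ζ) * x) -
              ∑ n ∈ range p, (Complex.I * α ^ j * ζ * x) ^ n / n.factorial)‖ := by
          rw [hsplit]; exact norm_add_le _ _
      _ ≤ x ^ d / d.factorial +
          (3 / 2) * z ^ (k + 1) * SX ^ N * (SZ ^ N)⁻¹ * Real.exp (z * x) := by
          rw [hmain, habsmain]
          exact add_le_add_right hremfinal _
end

section
/- Let V : ℝ → ℂ be a function, z ∈ ℂ, and let θ₁, θ₂ : ℝ → ℂ be three times differentiable functions satisfying i·θ_j'''(x) + (V(x) − z)·θ_j(x) = 0 for all x ∈ ℝ and j = 1, 2. Define u(x) = θ₁(x)·θ₂'(x) − θ₂(x)·θ₁'(x). Then u is three times differentiable and satisfies −i·u'''(x) + (V(x) − z)·u(x) = 0 for all x ∈ ℝ. -/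
/-- if `θ₁, θ₂` are three times differentiable with
`i·θ_j''' + (V−z)·θ_j = 0`, then `u = θ₁θ₂' − θ₂θ₁'` is three times differentiable and
satisfies `−i·u''' + (V−z)·u = 0`. -/
theorem stmt11 (V : ℝ → ℂ) (z : ℂ)
    (θ₁ d₁ dd₁ ddd₁ θ₂ d₂ dd₂ ddd₂ : ℝ → ℂ)
    (hθ₁ : ∀ x : ℝ, HasDerivAt θ₁ (d₁ x) x)
    (hd₁ : ∀ x : ℝ, HasDerivAt d₁ (dd₁ x) x)
    (hdd₁ : ∀ x : ℝ, HasDerivAt dd₁ (ddd₁ x) x)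
    (hθ₂ : ∀ x : ℝ, HasDerivAt θ₂ (d₂ x) x)
    (hd₂ : ∀ x : ℝ, HasDerivAt d₂ (dd₂ x) x)
    (hdd₂ : ∀ x : ℝ, HasDerivAt dd₂ (ddd₂ x) x)
    (heq₁ : ∀ x : ℝ, Complex.I * ddd₁ x + (V x - z) * θ₁ x = 0)
    (heq₂ : ∀ x : ℝ, Complex.I * ddd₂ x + (V x - z) * θ₂ x = 0)
    (u : ℝ → ℂ) (hu : ∀ x : ℝ, u x = θ₁ x * d₂ x - θ₂ x * d₁ x) :
    ∃ u₁ u₂ u₃ : ℝ → ℂ,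
      (∀ x : ℝ, HasDerivAt u (u₁ x) x) ∧
      (∀ x : ℝ, HasDerivAt u₁ (u₂ x) x) ∧
      (∀ x : ℝ, HasDerivAt u₂ (u₃ x) x) ∧
      (∀ x : ℝ, -Complex.I * u₃ x + (V x - z) * u x = 0) := by
  have hufun : u = fun x => θ₁ x * d₂ x - θ₂ x * d₁ x := funext hu
  refine ⟨fun x => θ₁ x * dd₂ x - θ₂ x * dd₁ x,
    fun x => d₁ x * dd₂ x - d₂ x * dd₁ x,
    fun x => d₁ x * ddd₂ x - d₂ x * ddd₁ x, ?_, ?_, ?_, ?_⟩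
  · intro x
    rw [hufun]
    have h := ((hθ₁ x).mul (hd₂ x)).sub ((hθ₂ x).mul (hd₁ x))
    convert h using 1
    exacts [rfl, rfl, by beta_reduce; ring]
  · intro x
    have h := ((hθ₁ x).mul (hdd₂ x)).sub ((hθ₂ x).mul (hdd₁ x))
    convert h using 1
    rotate_left 2
    have h1 := heq₁ x
    have h2 := heq₂ x
    have hI : Complex.I ≠ 0 := Complex.I_ne_zero
    have key : θ₁ x * ddd₂ x - θ₂ x * ddd₁ x = 0 := by
      have : Complex.I * (θ₁ x * ddd₂ x - θ₂ x * ddd₁ x) = 0 := by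
        linear_combination θ₁ x * h2 - θ₂ x * h1
      rcases mul_eq_zero.1 this with h | h
      · exact absurd h hI
      · exact h
    exacts [by beta_reduce; linear_combination -key, rfl, rfl]
  · intro x
    have h := ((hd₁ x).mul (hdd₂ x)).sub ((hd₂ x).mul (hdd₁ x))
    convert h using 1
    exacts [rfl, rfl, by beta_reduce; ring]
  · intro x
    rw [hu x]
    linear_combination (-(d₁ x)) * heq₂ x + d₂ x * heq₁ x
end

section
/- Let α = exp(2πi/3), fix x₀ ∈ ℝ and a, b, c ∈ ℂ, and set p(t) = a + bt + ct². Let v₀, v₁, v₂ : ℂ → ℂ be functions such that, as ζ → 0, v₀(ζ) − p(x₀) = O(ζ), v₁(ζ) − (b + 2cx₀) = O(ζ), and v₂(ζ) − 2c = O(ζ). Define Δ(ζ) = det [[e^{iζx₀}, e^{iαζx₀}, v₀(ζ)], [iζe^{iζx₀}, iαζe^{iαζx₀}, v₁(ζ)], [(iζ)²e^{iζx₀}, (iαζ)²e^{iαζx₀}, v₂(ζ)]]. Then Δ(ζ) − 2c·i·(α−1)·ζ·e^{i(1+α)ζx₀} = O(ζ²) as ζ → 0; in particular Δ(ζ)/ζ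 → 2c·i·(α−1) as ζ → 0, so Δ vanishes to exactly first order at ζ = 0 if and only if c ≠ 0. -/
open Asymptotics Filter Complex

private lemma key_alg (α : ℂ) (x₀ : ℝ) (c : ℂ) (v₀ v₁ v₂ : ℂ → ℂ) (ζ : ℂ) :
    Matrix.det
      !![Complex.exp (Complex.I * ζ * x₀), Complex.exp (Complex.I * α * ζ * x₀), v₀ ζ;
         Complex.I * ζ * Complex.exp (Complex.I * ζ * x₀),
           Complex.I * α * ζ * Complex.exp (Complex.I * α * ζ * x₀), v₁ ζ;
         (Complex.I * ζ) ^ 2 * Complex.exp (Complex.I * ζ * x₀),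
           (Complex.I * α * ζ) ^ 2 * Complex.exp (Complex.I * α * ζ * x₀), v₂ ζ]
    - 2 * c * Complex.I * (α - 1) * ζ * Complex.exp (Complex.I * (1 + α) * ζ * x₀)
    = Complex.exp (Complex.I * ζ * x₀) * Complex.exp (Complex.I * α * ζ * x₀) *
        ((-Complex.I) * α * (α - 1) * v₀ ζ * ζ ^ 3 + (α ^ 2 - 1) * v₁ ζ * ζ ^ 2
          + Complex.I * (α - 1) * (v₂ ζ - 2 * c) * ζ) := by
  rw [show Complex.I * (1 + α) * ζ * x₀ = Complex.I * ζ * x₀ + Complex.I * α * ζ * x₀ by ring,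
    Complex.exp_add, Matrix.det_fin_three]
  simp [Matrix.cons_val_zero, Matrix.cons_val_one]
  ring_nf
  rw [show (Complex.I : ℂ) ^ 3 = -Complex.I by rw [pow_succ, Complex.I_sq]; ring, Complex.I_sq]
  ring

/-- with `α = exp(2πi/3)`, `p(t) = a + bt + ct²`, and `v₀, v₁, v₂`
approximating `p(x₀)`, `p'(x₀)`, `p''(x₀)` to order `O(ζ)`, the determinant
`Δ(ζ) = det [[e^{iζx₀}, e^{iαζx₀}, v₀(ζ)], [iζe^{iζx₀}, iαζe^{iαζx₀}, v₁(ζ)],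
[(iζ)²e^{iζx₀}, (iαζ)²e^{iαζx₀}, v₂(ζ)]]` satisfies
`Δ(ζ) − 2c·i·(α−1)·ζ·e^{i(1+α)ζx₀} = O(ζ²)` as `ζ → 0`; in particular
`Δ(ζ)/ζ → 2c·i·(α−1)` as `ζ → 0`. -/
theorem stmt13 (α : ℂ) (hα : α = Complex.exp (2 * Real.pi * Complex.I / 3))
    (x₀ : ℝ) (a b c : ℂ) (v₀ v₁ v₂ : ℂ → ℂ)
    (hv₀ : (fun ζ : ℂ => v₀ ζ - (a + b * x₀ + c * (x₀ : ℂ) ^ 2)) =O[nhds 0] (fun ζ : ℂ => ζ))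
    (hv₁ : (fun ζ : ℂ => v₁ ζ - (b + 2 * c * x₀)) =O[nhds 0] (fun ζ : ℂ => ζ))
    (hv₂ : (fun ζ : ℂ => v₂ ζ - 2 * c) =O[nhds 0] (fun ζ : ℂ => ζ))
    (Δ : ℂ → ℂ)
    (hΔ : ∀ ζ : ℂ, Δ ζ = Matrix.det
      !![Complex.exp (Complex.I * ζ * x₀), Complex.exp (Complex.I * α * ζ * x₀), v₀ ζ;
         Complex.I * ζ * Complex.exp (Complex.I * ζ * x₀),
           Complex.I * α * ζ * Complex.exp (Complex.I * α * ζ * x₀), v₁ ζ;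
         (Complex.I * ζ) ^ 2 * Complex.exp (Complex.I * ζ * x₀),
           (Complex.I * α * ζ) ^ 2 * Complex.exp (Complex.I * α * ζ * x₀), v₂ ζ]) :
    ((fun ζ : ℂ => Δ ζ - 2 * c * Complex.I * (α - 1) * ζ
        * Complex.exp (Complex.I * (1 + α) * ζ * x₀)) =O[nhds 0] (fun ζ : ℂ => ζ ^ 2)) ∧
    Tendsto (fun ζ : ℂ => Δ ζ / ζ) (nhdsWithin 0 {0}ᶜ)
      (nhds (2 * c * Complex.I * (α - 1))) := by
  have hEq : ∀ ζ : ℂ, Δ ζ - 2 * c * Complex.I * (α - 1) * ζ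
        * Complex.exp (Complex.I * (1 + α) * ζ * x₀)
      = Complex.exp (Complex.I * ζ * x₀) * Complex.exp (Complex.I * α * ζ * x₀) *
        ((-Complex.I) * α * (α - 1) * v₀ ζ * ζ ^ 3 + (α ^ 2 - 1) * v₁ ζ * ζ ^ 2
          + Complex.I * (α - 1) * (v₂ ζ - 2 * c) * ζ) := by
    intro ζ; rw [hΔ]; exact key_alg α x₀ c v₀ v₁ v₂ ζ
  -- boundedness facts near 0
  have hid : Tendsto (fun ζ : ℂ => ζ) (nhds 0) (nhds 0) := tendsto_id
  have hζ1 : (fun ζ : ℂ => ζ) =O[nhds (0:ℂ)] (fun _ => (1:ℂ)) := hid.isBigO_one ℂ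
  have hE : (fun ζ : ℂ => Complex.exp (Complex.I * ζ * x₀) *
      Complex.exp (Complex.I * α * ζ * x₀)) =O[nhds (0:ℂ)] (fun _ => (1:ℂ)) := by
    have : Continuous (fun ζ : ℂ => Complex.exp (Complex.I * ζ * x₀) *
        Complex.exp (Complex.I * α * ζ * x₀)) := by continuity
    exact (this.tendsto 0).isBigO_one ℂ
  have hv₀b : v₀ =O[nhds (0:ℂ)] (fun _ => (1:ℂ)) := by
    have h1 : (fun ζ : ℂ => v₀ ζ - (a + b * x₀ + c * (x₀ : ℂ) ^ 2)) =O[nhds (0:ℂ)]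
        (fun _ => (1:ℂ)) := hv₀.trans hζ1
    have h2 : (fun _ : ℂ => (a + b * x₀ + c * (x₀ : ℂ) ^ 2)) =O[nhds (0:ℂ)]
        (fun _ => (1:ℂ)) := isBigO_const_const _ one_ne_zero _
    simpa using h1.add h2
  have hv₁b : v₁ =O[nhds (0:ℂ)] (fun _ => (1:ℂ)) := by
    have h1 : (fun ζ : ℂ => v₁ ζ - (b + 2 * c * x₀)) =O[nhds (0:ℂ)]
        (fun _ => (1:ℂ)) := hv₁.trans hζ1
    have h2 : (fun _ : ℂ => (b + 2 * c * x₀)) =O[nhds (0:ℂ)]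
        (fun _ => (1:ℂ)) := isBigO_const_const _ one_ne_zero _
    simpa using h1.add h2
  -- the three terms
  have hT1 : (fun ζ : ℂ => (-Complex.I) * α * (α - 1) * v₀ ζ * ζ ^ 3)
      =O[nhds (0:ℂ)] (fun ζ => ζ ^ 2) := by
    have hc : (fun _ : ℂ => (-Complex.I) * α * (α - 1)) =O[nhds (0:ℂ)]
        (fun _ => (1:ℂ)) := isBigO_const_const _ one_ne_zero _
    have := (hc.mul hv₀b).mul (hζ1.mul ((isBigO_refl (fun ζ : ℂ => ζ) _).mul
      (isBigO_refl (fun ζ : ℂ => ζ) _)))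
    simpa [pow_succ, mul_assoc, mul_comm, mul_left_comm] using this
  have hT2 : (fun ζ : ℂ => (α ^ 2 - 1) * v₁ ζ * ζ ^ 2)
      =O[nhds (0:ℂ)] (fun ζ => ζ ^ 2) := by
    have hc : (fun _ : ℂ => (α ^ 2 - 1)) =O[nhds (0:ℂ)]
        (fun _ => (1:ℂ)) := isBigO_const_const _ one_ne_zero _
    have := (hc.mul hv₁b).mul (isBigO_refl (fun ζ : ℂ => ζ ^ 2) _)
    simpa using this
  have hT3 : (fun ζ : ℂ => Complex.I * (α - 1) * (v₂ ζ - 2 * c) * ζ)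
      =O[nhds (0:ℂ)] (fun ζ => ζ ^ 2) := by
    have hc : (fun _ : ℂ => Complex.I * (α - 1)) =O[nhds (0:ℂ)]
        (fun _ => (1:ℂ)) := isBigO_const_const _ one_ne_zero _
    have := (hc.mul hv₂).mul (isBigO_refl (fun ζ : ℂ => ζ) _)
    simpa [pow_two, mul_assoc] using this
  have hsum : (fun ζ : ℂ => (-Complex.I) * α * (α - 1) * v₀ ζ * ζ ^ 3
      + (α ^ 2 - 1) * v₁ ζ * ζ ^ 2 + Complex.I * (α - 1) * (v₂ ζ - 2 * c) * ζ)
      =O[nhds (0:ℂ)] (fun ζ => ζ ^ 2) := (hT1.add hT2).add hT3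
  have hmain : (fun ζ : ℂ => Δ ζ - 2 * c * Complex.I * (α - 1) * ζ
      * Complex.exp (Complex.I * (1 + α) * ζ * x₀)) =O[nhds (0:ℂ)] (fun ζ => ζ ^ 2) := by
    have := hE.mul hsum
    simp only [one_mul] at this
    refine this.congr' (Eventually.of_forall fun ζ => (hEq ζ).symm) (by rfl)
  refine ⟨hmain, ?_⟩
  -- Tendsto part
  have hmain' : (fun ζ : ℂ => (Δ ζ - 2 * c * Complex.I * (α - 1) * ζ
      * Complex.exp (Complex.I * (1 + α) * ζ * x₀)) / ζ)
      =O[nhdsWithin (0:ℂ) {0}ᶜ] (fun ζ => ζ) := by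
    have h1 := (hmain.mono nhdsWithin_le_nhds).mul
      (isBigO_refl (fun ζ : ℂ => ζ⁻¹) (nhdsWithin (0:ℂ) {0}ᶜ))
    refine (h1.congr' (Eventually.of_forall fun ζ => (div_eq_mul_inv _ _).symm) ?_)
    filter_upwards [self_mem_nhdsWithin] with ζ hζ
    simp only [Set.mem_compl_iff, Set.mem_singleton_iff] at hζ
    field_simp [hζ]
  have ht0 : Tendsto (fun ζ : ℂ => (Δ ζ - 2 * c * Complex.I * (α - 1) * ζ
      * Complex.exp (Complex.I * (1 + α) * ζ * x₀)) / ζ)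
      (nhdsWithin (0:ℂ) {0}ᶜ) (nhds 0) :=
    hmain'.trans_tendsto (tendsto_id.mono_left nhdsWithin_le_nhds)
  have htE : Tendsto (fun ζ : ℂ => 2 * c * Complex.I * (α - 1)
      * Complex.exp (Complex.I * (1 + α) * ζ * x₀)) (nhdsWithin (0:ℂ) {0}ᶜ)
      (nhds (2 * c * Complex.I * (α - 1))) := by
    have hcont : Continuous (fun ζ : ℂ => 2 * c * Complex.I * (α - 1)
        * Complex.exp (Complex.I * (1 + α) * ζ * x₀)) := by continuity
    have := (hcont.tendsto 0).mono_left (nhdsWithin_le_nhds (s := {(0:ℂ)}ᶜ))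
    simpa using this
  have := ht0.add htE
  rw [zero_add] at this
  refine this.congr' ?_
  filter_upwards [self_mem_nhdsWithin] with ζ hζ
  simp only [Set.mem_compl_iff, Set.mem_singleton_iff] at hζ
  field_simp
  ring
end

section
/- Let α = exp(2πi/3) and let ζ ∈ ℂ with ζ ≠ 0 and 0 ≤ arg ζ ≤ π/3. Define R(x,y;ζ) = (i/3)·(e^{iζ(x−y)}/ζ² + e^{iαζ(x−y)}/(αζ)²) for x ≥ y, and R(x,y;ζ) = −(i/3)·e^{iα²ζ(x−y)}/(α²ζ)² for x < y. Then for all x, y ∈ ℝ one has |R(x,y;ζ) − (α/3)·(−iα/ζ² + (x−y)/ζ)| ≤ (2/3)·|x−y|². -/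
open Complex

lemma exp_lin_bound {z : ℂ} (hz : z.re ≤ 0) :
    ‖Complex.exp z - 1‖ ≤ ‖z‖ := by
  have hS : Convex ℝ {w : ℂ | w.re ≤ 0} := convex_halfSpace_re_le 0
  have h := hS.norm_image_sub_le_of_norm_hasDerivWithin_le
    (f := fun u : ℂ => Complex.exp u) (f' := fun u : ℂ => Complex.exp u)
    (fun u _ => (Complex.hasDerivAt_exp u).hasDerivWithinAt) (C := 1)
    (fun u hu => by
      simp only [Complex.norm_exp]
      exact Real.exp_le_one_iff.mpr hu)
    (by simp : (0:ℂ) ∈ {w : ℂ | w.re ≤ 0}) hz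
  simpa using h

lemma exp_quad_bound {z : ℂ} (hz : z.re ≤ 0) :
    ‖Complex.exp z - 1 - z‖ ≤ ‖z‖ ^ 2 := by
  set S : Set ℂ := {w : ℂ | w.re ≤ 0} ∩ Metric.closedBall 0 (‖z‖) with hSdef
  have hS : Convex ℝ S := (convex_halfSpace_re_le 0).inter (convex_closedBall _ _)
  have h := hS.norm_image_sub_le_of_norm_hasDerivWithin_le
    (f := fun u : ℂ => Complex.exp u - 1 - u) (f' := fun u : ℂ => Complex.exp u - 1)
    (fun u _ => (((Complex.hasDerivAt_exp u).sub_const 1).sub (hasDerivAt_id u)).hasDerivWithinAt)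
    (C := ‖z‖)
    (fun u hu => by
      have h1 : ‖Complex.exp u - 1‖ ≤ ‖u‖ := exp_lin_bound hu.1
      have h2 : ‖u‖ ≤ ‖z‖ := by
        simpa using Metric.mem_closedBall.mp hu.2
      simpa using h1.trans h2)
    (by simp [hSdef] : (0:ℂ) ∈ S)
    (by simp [hSdef, hz] : z ∈ S)
  simpa [sq] using h

/-- The integral kernel of the resolvent of `(−i d/dx)³` at `z = ζ³`:
`R(x,y;ζ) = (i/3)(e^{iζ(x−y)}/ζ² + e^{iαζ(x−y)}/(αζ)²)` for `x ≥ y` and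
`R(x,y;ζ) = −(i/3)e^{iα²ζ(x−y)}/(α²ζ)²` for `x < y`. -/
noncomputable def Rker (α ζ : ℂ) (x y : ℝ) : ℂ :=
  if y ≤ x then
    (Complex.I / 3) * (Complex.exp (Complex.I * ζ * (x - y)) / ζ ^ 2
      + Complex.exp (Complex.I * α * ζ * (x - y)) / (α * ζ) ^ 2)
  else
    -(Complex.I / 3) * Complex.exp (Complex.I * α ^ 2 * ζ * (x - y)) / (α ^ 2 * ζ) ^ 2

lemma key1_aux (α ζ E₁ E₂ c : ℂ) (hα0 : α ≠ 0) (hζ : ζ ≠ 0) (hα3 : α^3 = 1)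
    (hαsum : α^2+α+1 = 0) :
    (Complex.I/3)*(E₁/ζ^2 + E₂/(α*ζ)^2) - (α/3)*(-Complex.I*α/ζ^2 + c/ζ)
      = (Complex.I/3)*((E₁ - 1 - Complex.I*ζ*c)/ζ^2 + (E₂ - 1 - Complex.I*α*ζ*c)/(α*ζ)^2) := by
  have hdiv : ∀ E : ℂ, E/(α*ζ)^2 = E * α / ζ^2 := by
    intro E
    rw [div_eq_div_iff (pow_ne_zero 2 (mul_ne_zero hα0 hζ)) (pow_ne_zero 2 hζ)]
    linear_combination (-(E*ζ^2))*hα3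
  rw [hdiv, hdiv, show c/ζ = c*ζ/ζ^2 from by rw [sq, mul_div_mul_right _ _ hζ]]
  linear_combination ((Complex.I - ζ*c)/(3*ζ^2)) * hαsum
    + (ζ*c*(α^2+1)/(3*ζ^2)) * Complex.I_sq

lemma key2_aux (α ζ E c : ℂ) (hα0 : α ≠ 0) (hζ : ζ ≠ 0) (hα3 : α^3 = 1)
    (hαsum : α^2+α+1 = 0) :
    -(Complex.I/3) * E / (α^2*ζ)^2 - (α/3)*(-Complex.I*α/ζ^2 + c/ζ)
      = -(Complex.I/3) * ((E - 1 - Complex.I*α^2*ζ*c)/(α^2*ζ)^2) := by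
  have hdiv : ∀ F : ℂ, F/(α^2*ζ)^2 = F * α^2 / ζ^2 := by
    intro F
    rw [div_eq_div_iff (pow_ne_zero 2 (mul_ne_zero (pow_ne_zero 2 hα0) hζ)) (pow_ne_zero 2 hζ)]
    linear_combination (-(F*ζ^2)*(α^3+1))*hα3
  rw [show -(Complex.I/3) * E / (α^2*ζ)^2 = (-(Complex.I/3) * E) / (α^2*ζ)^2 from by ring,
    hdiv, hdiv, show c/ζ = c*ζ/ζ^2 from by rw [sq, mul_div_mul_right _ _ hζ]]
  linear_combination (ζ*c*α*(α-1)/(3*ζ^2)) * hαsum - (ζ*c*α^4/(3*ζ^2)) * Complex.I_sq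

lemma re_formula (w : ℂ) (T : ℝ) : (Complex.I * w * (T:ℂ)).re = -(w.im * T) := by
  simp [Complex.mul_re, Complex.mul_im]

/-- for `α = exp(2πi/3)` and `ζ ≠ 0` with `0 ≤ arg ζ ≤ π/3`, for all
`x, y ∈ ℝ`, `|R(x,y;ζ) − (α/3)(−iα/ζ² + (x−y)/ζ)| ≤ (2/3)|x−y|²`. -/
theorem stmt16 (α : ℂ) (hα : α = Complex.exp (2 * Real.pi * Complex.I / 3))
    (ζ : ℂ) (hζ : ζ ≠ 0) (harg₀ : 0 ≤ ζ.arg) (harg₁ : ζ.arg ≤ Real.pi / 3)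
    (x y : ℝ) :
    ‖Rker α ζ x y
        - (α / 3) * (-Complex.I * α / ζ ^ 2 + ((x : ℂ) - (y : ℂ)) / ζ)‖ ≤
      (2 / 3) * |x - y| ^ 2 := by
  have pi_pos := Real.pi_pos
  -- basic facts about α
  have hα0 : α ≠ 0 := by rw [hα]; exact Complex.exp_ne_zero _
  have hαexp : α = Complex.exp (((2 * Real.pi / 3 : ℝ) : ℂ) * Complex.I) := by
    rw [hα]; congr 1; push_cast; ring
  have hα2exp : α ^ 2 = Complex.exp (((-(2 * Real.pi / 3) : ℝ) : ℂ) * Complex.I) := by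
    rw [hαexp, sq, ← Complex.exp_add]
    have : Complex.exp (((2 * Real.pi / 3 : ℝ) : ℂ) * Complex.I
        + ((2 * Real.pi / 3 : ℝ) : ℂ) * Complex.I)
        = Complex.exp (((-(2 * Real.pi / 3) : ℝ) : ℂ) * Complex.I)
          * Complex.exp (2 * Real.pi * Complex.I) := by
      rw [← Complex.exp_add]; congr 1; push_cast; ring
    rw [this, Complex.exp_two_pi_mul_I, mul_one]
  have hargα : α.arg = 2 * Real.pi / 3 := by
    rw [hαexp, Complex.exp_mul_I]
    exact Complex.arg_cos_add_sin_mul_I ⟨by linarith, by linarith⟩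
  have hargα2 : (α ^ 2).arg = -(2 * Real.pi / 3) := by
    rw [hα2exp, Complex.exp_mul_I]
    exact Complex.arg_cos_add_sin_mul_I ⟨by linarith, by linarith⟩
  have habsα : ‖α‖ = 1 := by
    rw [hα, Complex.norm_exp]; norm_num
  have hα3 : α ^ 3 = 1 := by
    rw [hα, ← Complex.exp_nat_mul]
    have : (3 : ℂ) * (2 * Real.pi * Complex.I / 3) = 2 * Real.pi * Complex.I := by ring
    rw [show ((3:ℕ):ℂ) = (3:ℂ) by norm_num, this, Complex.exp_two_pi_mul_I]
  have hα1 : α ≠ 1 := by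
    intro h
    rw [h, Complex.arg_one] at hargα
    have : Real.pi ≤ 0 := by linarith
    linarith
  have hαsum : α ^ 2 + α + 1 = 0 := by
    have h3 : (α - 1) * (α ^ 2 + α + 1) = 0 := by linear_combination hα3
    rcases mul_eq_zero.mp h3 with h | h
    · exact absurd (sub_eq_zero.mp h) hα1
    · exact h
  -- imaginary parts
  have himζ : 0 ≤ ζ.im := Complex.arg_nonneg_iff.mp harg₀
  have himαζ : 0 ≤ (α * ζ).im := by
    have hmem : α.arg + ζ.arg ∈ Set.Ioc (-Real.pi) Real.pi := by
      constructor <;> rw [hargα] <;> [linarith; linarith]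
    have := Complex.arg_mul hα0 hζ hmem
    apply Complex.arg_nonneg_iff.mp
    rw [this, hargα]; linarith
  have himα2ζ : (α ^ 2 * ζ).im ≤ 0 := by
    have hα20 : α ^ 2 ≠ 0 := pow_ne_zero _ hα0
    have hmem : (α ^ 2).arg + ζ.arg ∈ Set.Ioc (-Real.pi) Real.pi := by
      constructor <;> rw [hargα2] <;> [linarith; linarith]
    have harg := Complex.arg_mul hα20 hζ hmem
    have : (α ^ 2 * ζ).arg < 0 := by rw [harg, hargα2]; linarith
    exact le_of_lt (Complex.arg_neg_iff.mp this)
  have hζabs : 0 < ‖ζ‖ := norm_pos_iff.mpr hζ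
  by_cases h : y ≤ x
  · -- case x ≥ y
    have hT : (0:ℝ) ≤ x - y := by linarith
    set z₁ : ℂ := Complex.I * ζ * ((x:ℂ) - (y:ℂ)) with hz₁
    set z₂ : ℂ := Complex.I * α * ζ * ((x:ℂ) - (y:ℂ)) with hz₂
    have hc : ((x:ℂ) - (y:ℂ)) = ((x - y : ℝ) : ℂ) := by push_cast; ring
    have hre₁ : z₁.re ≤ 0 := by
      rw [show z₁ = Complex.I * ζ * ((x - y : ℝ) : ℂ) from by rw [hz₁, hc], re_formula]
      nlinarith
    have hre₂ : z₂.re ≤ 0 := by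
      rw [show z₂ = Complex.I * (α * ζ) * ((x - y : ℝ) : ℂ) from by rw [hz₂, hc]; ring,
        re_formula]
      nlinarith
    have habs₁ : ‖z₁‖ = ‖ζ‖ * |x - y| := by
      rw [show z₁ = Complex.I * ζ * ((x - y : ℝ) : ℂ) from by rw [hz₁, hc], norm_mul, norm_mul,
        Complex.norm_I, one_mul, Complex.norm_real, Real.norm_eq_abs]
    have habs₂ : ‖z₂‖ = ‖ζ‖ * |x - y| := by
      rw [show z₂ = Complex.I * (α * ζ) * ((x - y : ℝ) : ℂ) from by rw [hz₂, hc]; ring,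
        norm_mul, norm_mul, Complex.norm_I, one_mul, norm_mul, habsα, one_mul, Complex.norm_real, Real.norm_eq_abs]
    have hb₁ := exp_quad_bound hre₁
    have hb₂ := exp_quad_bound hre₂
    have key : Rker α ζ x y
        - (α / 3) * (-Complex.I * α / ζ ^ 2 + ((x : ℂ) - (y : ℂ)) / ζ)
        = (Complex.I / 3) * ((Complex.exp z₁ - 1 - z₁) / ζ ^ 2
          + (Complex.exp z₂ - 1 - z₂) / (α * ζ) ^ 2) := by
      rw [Rker, if_pos h]
      exact key1_aux α ζ _ _ _ hα0 hζ hα3 hαsum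
    rw [key]
    have e1 : ‖(Complex.exp z₁ - 1 - z₁) / ζ ^ 2‖
        ≤ |x - y| ^ 2 := by
      rw [norm_div, norm_pow]
      rw [div_le_iff₀ (by positivity)]
      calc ‖Complex.exp z₁ - 1 - z₁‖ ≤ ‖z₁‖ ^ 2 := hb₁
        _ = |x - y| ^ 2 * ‖ζ‖ ^ 2 := by rw [habs₁]; ring
    have e2 : ‖(Complex.exp z₂ - 1 - z₂) / (α * ζ) ^ 2‖
        ≤ |x - y| ^ 2 := by
      rw [norm_div, norm_pow, norm_mul, habsα, one_mul]
      rw [div_le_iff₀ (by positivity)]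
      calc ‖Complex.exp z₂ - 1 - z₂‖ ≤ ‖z₂‖ ^ 2 := hb₂
        _ = |x - y| ^ 2 * ‖ζ‖ ^ 2 := by rw [habs₂]; ring
    calc ‖(Complex.I / 3) * ((Complex.exp z₁ - 1 - z₁) / ζ ^ 2
          + (Complex.exp z₂ - 1 - z₂) / (α * ζ) ^ 2)‖
        = (1/3) * ‖(Complex.exp z₁ - 1 - z₁) / ζ ^ 2
          + (Complex.exp z₂ - 1 - z₂) / (α * ζ) ^ 2‖ := by
          rw [norm_mul]; norm_num
      _ ≤ (1/3) * (|x - y| ^ 2 + |x - y| ^ 2) := by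
          have := (norm_add_le ((Complex.exp z₁ - 1 - z₁) / ζ ^ 2)
            ((Complex.exp z₂ - 1 - z₂) / (α * ζ) ^ 2))
          nlinarith [this, e1, e2]
      _ = (2/3) * |x - y| ^ 2 := by ring
  · -- case x < y
    have hT : x - y < 0 := by push_neg at h; linarith
    set z₃ : ℂ := Complex.I * α ^ 2 * ζ * ((x:ℂ) - (y:ℂ)) with hz₃
    have hc : ((x:ℂ) - (y:ℂ)) = ((x - y : ℝ) : ℂ) := by push_cast; ring
    have hre₃ : z₃.re ≤ 0 := by
      rw [show z₃ = Complex.I * (α ^ 2 * ζ) * ((x - y : ℝ) : ℂ) from by rw [hz₃, hc]; ring,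
        re_formula]
      nlinarith
    have habs₃ : ‖z₃‖ = ‖ζ‖ * |x - y| := by
      rw [show z₃ = Complex.I * (α ^ 2 * ζ) * ((x - y : ℝ) : ℂ) from by rw [hz₃, hc]; ring,
        norm_mul, norm_mul, Complex.norm_I, one_mul, norm_mul, norm_pow, habsα, one_pow, one_mul,
        Complex.norm_real, Real.norm_eq_abs]
    have hb₃ := exp_quad_bound hre₃
    have key : Rker α ζ x y
        - (α / 3) * (-Complex.I * α / ζ ^ 2 + ((x : ℂ) - (y : ℂ)) / ζ)
        = -(Complex.I / 3) * ((Complex.exp z₃ - 1 - z₃) / (α ^ 2 * ζ) ^ 2) := by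
      rw [Rker, if_neg h]
      exact key2_aux α ζ _ _ hα0 hζ hα3 hαsum
    rw [key]
    have e3 : ‖(Complex.exp z₃ - 1 - z₃) / (α ^ 2 * ζ) ^ 2‖
        ≤ |x - y| ^ 2 := by
      rw [norm_div, norm_pow, norm_mul, norm_pow, habsα, one_pow, one_mul]
      rw [div_le_iff₀ (by positivity)]
      calc ‖Complex.exp z₃ - 1 - z₃‖ ≤ ‖z₃‖ ^ 2 := hb₃
        _ = |x - y| ^ 2 * ‖ζ‖ ^ 2 := by rw [habs₃]; ring
    calc ‖-(Complex.I / 3) * ((Complex.exp z₃ - 1 - z₃) / (α ^ 2 * ζ) ^ 2)‖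
        = (1/3) * ‖(Complex.exp z₃ - 1 - z₃) / (α ^ 2 * ζ) ^ 2‖ := by
          rw [norm_mul]; norm_num
      _ ≤ (1/3) * |x - y| ^ 2 := by nlinarith [e3]
      _ ≤ (2/3) * |x - y| ^ 2 := by nlinarith [sq_nonneg (x - y), _root_.sq_abs (x-y)]
end

section
/- Let α = exp(2πi/3) and let ζ ∈ ℂ with 0 < arg ζ < π/3. Define R(x,y;ζ) = (i/3)·(e^{iζ(x−y)}/ζ² + e^{iαζ(x−y)}/(αζ)²) for x ≥ y, and R(x,y;ζ) = −(i/3)·e^{iα²ζ(x−y)}/(α²ζ)² for x < y. Let f : ℝ → ℂ be continuous with compact support and define u(x) = ∫_ℝ R(x,y;ζ)·f(y) dy. Then u is three times continuously differentiable on ℝ, u is square integrable on ℝ, and i·u'''(x) − ζ³·u(x) = f(x) for all x ∈ ℝ (equivalently, ((−i d/dx)³ − ζ³)u = f). -/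
open Complex MeasureTheory

/- ### Auxiliary material -/

lemma hasDerivAt_Iic_int (g : ℝ → ℂ) (hg : Continuous g) (hgi : Integrable g) (x : ℝ) :
    HasDerivAt (fun t => ∫ y in Set.Iic t, g y) (g x) x := by
  have key : (fun t => ∫ y in Set.Iic t, g y)
      = fun t => (∫ y in Set.Iic (0:ℝ), g y) + ∫ y in (0:ℝ)..t, g y := by
    funext t
    rw [← intervalIntegral.integral_Iic_sub_Iic hgi.integrableOn hgi.integrableOn]
    ring
  rw [key]
  exact (intervalIntegral.integral_hasDerivAt_right hgi.intervalIntegrable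
    (hg.stronglyMeasurableAtFilter _ _) hg.continuousAt).const_add _

lemma integrable_exp_neg_abs' {c : ℝ} (hc : 0 < c) :
    Integrable fun x : ℝ => Real.exp (-c * |x|) := by
  rw [← integrableOn_univ, ← @Set.Iio_union_Ici _ _ (0 : ℝ), integrableOn_union,
    integrableOn_Ici_iff_integrableOn_Ioi]
  constructor
  · rw [← (Measure.measurePreserving_neg (volume : Measure ℝ)).integrableOn_comp_preimage
        (Homeomorph.neg ℝ).measurableEmbedding]
    simp only [Function.comp_def, abs_neg, Set.neg_preimage, Set.neg_Iio, neg_zero]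
    apply ((exp_neg_integrableOn_Ioi 0 hc).congr_fun ?_ measurableSet_Ioi)
    intro y hy
    simp only [abs_of_pos (Set.mem_Ioi.mp hy)]
  · apply ((exp_neg_integrableOn_Ioi 0 hc).congr_fun ?_ measurableSet_Ioi)
    intro y hy
    simp only [abs_of_pos (Set.mem_Ioi.mp hy)]

noncomputable def Eker (μ : ℂ) (t : ℝ) : ℂ := Complex.exp (Complex.I * μ * t)
noncomputable def Pker (f : ℝ → ℂ) (μ : ℂ) (t : ℝ) : ℂ :=
  ∫ y in Set.Iic t, Complex.exp (-(Complex.I * μ * y)) * f y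
noncomputable def Qker (f : ℝ → ℂ) (μ : ℂ) (t : ℝ) : ℂ :=
  ∫ y in Set.Ioi t, Complex.exp (-(Complex.I * μ * y)) * f y

lemma gker_cont {f : ℝ → ℂ} (hf : Continuous f) (μ : ℂ) :
    Continuous (fun y : ℝ => Complex.exp (-(Complex.I * μ * y)) * f y) :=
  (Complex.continuous_exp.comp (by fun_prop)).mul hf

lemma gker_integrable {f : ℝ → ℂ} (hf : Continuous f) (hfc : HasCompactSupport f) (μ : ℂ) :
    Integrable (fun y : ℝ => Complex.exp (-(Complex.I * μ * y)) * f y) :=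
  (gker_cont hf μ).integrable_of_hasCompactSupport (hfc.mul_left)

lemma exp_mul_exp_neg (μ : ℂ) (x : ℝ) :
    Complex.exp (Complex.I * μ * x) * Complex.exp (-(Complex.I * μ * x)) = 1 := by
  rw [← Complex.exp_add]; simp

lemma Eker_hasDerivAt (μ : ℂ) (x : ℝ) : HasDerivAt (Eker μ) (Complex.I * μ * Eker μ x) x := by
  have h1 : HasDerivAt (fun t : ℝ => Complex.I * μ * (t : ℂ)) (Complex.I * μ) x := by
    simpa using (hasDerivAt_id x).ofReal_comp.const_mul (Complex.I * μ)
  refine h1.cexp.congr_deriv (Eq.symm ?_)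
  simp [Eker]; ring

lemma EP_hasDerivAt {f : ℝ → ℂ} (hf : Continuous f) (hfc : HasCompactSupport f) (μ : ℂ) (x : ℝ) :
    HasDerivAt (fun t => Eker μ t * Pker f μ t)
      (Complex.I * μ * (Eker μ x * Pker f μ x) + f x) x := by
  have hP : HasDerivAt (Pker f μ) (Complex.exp (-(Complex.I * μ * x)) * f x) x :=
    hasDerivAt_Iic_int _ (gker_cont hf μ) (gker_integrable hf hfc μ) x
  refine ((Eker_hasDerivAt μ x).mul hP).congr_deriv (Eq.symm ?_)
  simp only [Eker]
  linear_combination (-(f x)) * exp_mul_exp_neg μ x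

lemma Qker_eq {f : ℝ → ℂ} (hf : Continuous f) (hfc : HasCompactSupport f) (μ : ℂ) (t : ℝ) :
    Qker f μ t = (∫ y : ℝ, Complex.exp (-(Complex.I * μ * y)) * f y) - Pker f μ t := by
  rw [eq_sub_iff_add_eq, Qker, Pker, add_comm]
  exact intervalIntegral.integral_Iic_add_Ioi (gker_integrable hf hfc μ).integrableOn
    (gker_integrable hf hfc μ).integrableOn

lemma EQ_hasDerivAt {f : ℝ → ℂ} (hf : Continuous f) (hfc : HasCompactSupport f) (μ : ℂ) (x : ℝ) :
    HasDerivAt (fun t => Eker μ t * Qker f μ t)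
      (Complex.I * μ * (Eker μ x * Qker f μ x) - f x) x := by
  have hP : HasDerivAt (Pker f μ) (Complex.exp (-(Complex.I * μ * x)) * f x) x :=
    hasDerivAt_Iic_int _ (gker_cont hf μ) (gker_integrable hf hfc μ) x
  have hQ : HasDerivAt (Qker f μ) (-(Complex.exp (-(Complex.I * μ * x)) * f x)) x := by
    have hq : Qker f μ = fun t => (∫ y : ℝ, Complex.exp (-(Complex.I * μ * y)) * f y)
        - Pker f μ t := funext (Qker_eq hf hfc μ)
    rw [hq]
    exact hP.const_sub _
  refine ((Eker_hasDerivAt μ x).mul hQ).congr_deriv (Eq.symm ?_)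
  simp only [Eker]
  linear_combination (f x) * exp_mul_exp_neg μ x

lemma usplit {f : ℝ → ℂ} (hf : Continuous f) (hfc : HasCompactSupport f) (α ζ : ℂ) (x : ℝ) :
    (∫ y : ℝ, Rker α ζ x y * f y)
      = (Complex.I/3)/ζ^2 * (Eker ζ x * Pker f ζ x)
        + (Complex.I/3)/(α*ζ)^2 * (Eker (α*ζ) x * Pker f (α*ζ) x)
        + (-(Complex.I/3)/(α^2*ζ)^2) * (Eker (α^2*ζ) x * Qker f (α^2*ζ) x) := by
  set c₁ : ℂ := (Complex.I/3)/ζ^2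
  set c₂ : ℂ := (Complex.I/3)/(α*ζ)^2
  set c₃ : ℂ := -(Complex.I/3)/(α^2*ζ)^2
  set g : ℂ → ℝ → ℂ := fun μ y => Complex.exp (-(Complex.I * μ * y)) * f y with hg
  set h₁ : ℝ → ℂ := fun y => (c₁ * Eker ζ x) * g ζ y + (c₂ * Eker (α*ζ) x) * g (α*ζ) y with hh₁
  set h₂ : ℝ → ℂ := fun y => (c₃ * Eker (α^2*ζ) x) * g (α^2*ζ) y with hh₂
  have hker : ∀ y : ℝ, Rker α ζ x y * f y
      = Set.indicator (Set.Iic x) h₁ y + Set.indicator (Set.Ioi x) h₂ y := by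
    intro y
    by_cases hy : y ≤ x
    · rw [Set.indicator_of_mem (by exact hy : y ∈ Set.Iic x),
        Set.indicator_of_notMem (by simpa using hy)]
      have e1 : Complex.exp (Complex.I * ζ * ((x:ℂ) - (y:ℂ)))
          = Eker ζ x * Complex.exp (-(Complex.I * ζ * y)) := by
        rw [Eker, ← Complex.exp_add]; congr 1; ring
      have e2 : Complex.exp (Complex.I * α * ζ * ((x:ℂ) - (y:ℂ)))
          = Eker (α*ζ) x * Complex.exp (-(Complex.I * (α*ζ) * y)) := by
        rw [Eker, ← Complex.exp_add]; congr 1; ring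
      simp only [Rker, if_pos hy, hh₁, hg, add_zero]
      rw [e1, e2]
      ring
    · rw [Set.indicator_of_notMem (by simpa using hy),
        Set.indicator_of_mem (by simpa using not_le.mp hy : y ∈ Set.Ioi x)]
      have e3 : Complex.exp (Complex.I * α^2 * ζ * ((x:ℂ) - (y:ℂ)))
          = Eker (α^2*ζ) x * Complex.exp (-(Complex.I * (α^2*ζ) * y)) := by
        rw [Eker, ← Complex.exp_add]; congr 1; ring
      simp only [Rker, if_neg hy, hh₂, hg, zero_add]
      rw [e3]
      ring
  have hi1 : Integrable h₁ :=
    (((gker_integrable hf hfc ζ).const_mul _).add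
      ((gker_integrable hf hfc (α*ζ)).const_mul _))
  have hi2 : Integrable h₂ := (gker_integrable hf hfc (α^2*ζ)).const_mul _
  calc (∫ y : ℝ, Rker α ζ x y * f y)
      = ∫ y : ℝ, (Set.indicator (Set.Iic x) h₁ y + Set.indicator (Set.Ioi x) h₂ y) := by
        exact integral_congr_ae (Filter.Eventually.of_forall hker)
    _ = (∫ y : ℝ, Set.indicator (Set.Iic x) h₁ y) + ∫ y : ℝ, Set.indicator (Set.Ioi x) h₂ y :=
        integral_add (hi1.indicator measurableSet_Iic) (hi2.indicator measurableSet_Ioi)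
    _ = (∫ y in Set.Iic x, h₁ y) + ∫ y in Set.Ioi x, h₂ y := by
        rw [integral_indicator measurableSet_Iic, integral_indicator measurableSet_Ioi]
    _ = ((c₁ * Eker ζ x) * Pker f ζ x + (c₂ * Eker (α*ζ) x) * Pker f (α*ζ) x)
        + (c₃ * Eker (α^2*ζ) x) * Qker f (α^2*ζ) x := by
        rw [Pker, Pker, Qker]
        congr 1
        · rw [hh₁]
          rw [integral_add (((gker_integrable hf hfc ζ).const_mul _).integrableOn)
            (((gker_integrable hf hfc (α*ζ)).const_mul _).integrableOn)]
          rw [integral_const_mul, integral_const_mul]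
        · rw [hh₂]; exact integral_const_mul _ _
    _ = _ := by ring

lemma Eker_norm (μ : ℂ) (x : ℝ) : ‖Eker μ x‖ = Real.exp (-μ.im * x) := by
  rw [Eker, Complex.norm_exp]
  congr 1
  simp [Complex.mul_re, Complex.mul_im]

lemma decayP {ν δ r x : ℝ} (hν : 0 < ν) (hδ0 : 0 < δ) (hδ : δ ≤ ν) (hr : 0 ≤ r)
    (hx : -r ≤ x) : Real.exp (-ν * x) ≤ Real.exp (2*ν*r) * Real.exp (-δ * |x|) := by
  rw [← Real.exp_add, Real.exp_le_exp]
  rcases le_or_gt 0 x with h | h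
  · rw [_root_.abs_of_nonneg h]; nlinarith
  · rw [abs_of_neg h]; nlinarith

lemma decayQ {ν δ r x : ℝ} (hν : 0 < ν) (hδ0 : 0 < δ) (hδ : δ ≤ ν) (hr : 0 ≤ r)
    (hx : x ≤ r) : Real.exp (ν * x) ≤ Real.exp (2*ν*r) * Real.exp (-δ * |x|) := by
  rw [← Real.exp_add, Real.exp_le_exp]
  rcases le_or_gt 0 x with h | h
  · rw [_root_.abs_of_nonneg h]; nlinarith
  · rw [abs_of_neg h]; nlinarith

/-- for `α = exp(2πi/3)`, `0 < arg ζ < π/3`, and `f` continuous with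
compact support, the function `u(x) = ∫ R(x,y;ζ)f(y) dy` is `C³`, square integrable,
and satisfies `i·u''' − ζ³·u = f` (i.e. `((−i d/dx)³ − ζ³)u = f`). -/
theorem stmt17 (α : ℂ) (hα : α = Complex.exp (2 * Real.pi * Complex.I / 3))
    (ζ : ℂ) (harg₀ : 0 < ζ.arg) (harg₁ : ζ.arg < Real.pi / 3)
    (f : ℝ → ℂ) (hf : Continuous f) (hfc : HasCompactSupport f)
    (u : ℝ → ℂ) (hu : ∀ x : ℝ, u x = ∫ y : ℝ, Rker α ζ x y * f y) :
    ContDiff ℝ 3 u ∧ MemLp u 2 (volume : Measure ℝ) ∧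
      ∀ x : ℝ, Complex.I * iteratedDeriv 3 u x - ζ ^ 3 * u x = f x := by
  -- basic algebraic facts
  have hζ : ζ ≠ 0 := by
    intro h; rw [h] at harg₀; simp [Complex.arg_zero] at harg₀
  have habs : 0 < ‖ζ‖ := norm_pos_iff.mpr hζ
  have hpi := Real.pi_gt_three
  have h3 : α ^ 3 = 1 := by
    rw [hα, ← Complex.exp_nat_mul]
    rw [show (3:ℕ) * (2 * (Real.pi:ℂ) * Complex.I / 3) = 2 * Real.pi * Complex.I by
      push_cast; ring]
    exact Complex.exp_two_pi_mul_I
  have hαne0 : α ≠ 0 := by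
    intro h; rw [h] at h3; simp at h3
  have hθ : α = Complex.exp (((2 * Real.pi / 3 : ℝ) : ℂ) * Complex.I) := by
    rw [hα]; congr 1; push_cast; ring
  have hθ2 : α ^ 2 = Complex.exp (((4 * Real.pi / 3 : ℝ) : ℂ) * Complex.I) := by
    rw [hθ, sq, ← Complex.exp_add]; congr 1; push_cast; ring
  have him : ∀ θ : ℝ, (Complex.exp (↑θ * Complex.I) * ζ).im
      = ‖ζ‖ * Real.sin (ζ.arg + θ) := by
    intro θ
    conv_lhs => rw [← Complex.norm_mul_exp_arg_mul_I ζ]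
    rw [show Complex.exp (↑θ*Complex.I) * (↑‖ζ‖ * Complex.exp (↑ζ.arg * Complex.I))
        = ↑‖ζ‖ * Complex.exp (↑(ζ.arg + θ) * Complex.I) by
      rw [Complex.ofReal_add, add_mul, Complex.exp_add]; ring]
    rw [Complex.mul_im, Complex.ofReal_re, Complex.ofReal_im, zero_mul, add_zero,
      Complex.exp_ofReal_mul_I_im]
  have him1 : 0 < ζ.im := by
    have := him 0
    simp only [Complex.ofReal_zero, zero_mul, Complex.exp_zero, one_mul, add_zero] at this
    rw [this]
    exact mul_pos habs (Real.sin_pos_of_pos_of_lt_pi harg₀ (by linarith))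
  have him2 : 0 < (α * ζ).im := by
    rw [hθ, him]
    exact mul_pos habs (Real.sin_pos_of_pos_of_lt_pi (by linarith) (by linarith))
  have him3 : (α ^ 2 * ζ).im < 0 := by
    rw [hθ2, him, show ζ.arg + 4 * Real.pi / 3 = (ζ.arg + Real.pi / 3) + Real.pi by ring,
      Real.sin_add_pi]
    have hpos : 0 < Real.sin (ζ.arg + Real.pi / 3) :=
      Real.sin_pos_of_pos_of_lt_pi (by linarith) (by linarith)
    nlinarith
  have hαne : α ≠ 1 := by
    intro h
    have him0 : α.im = Real.sin (2 * Real.pi / 3) := by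
      rw [hθ, Complex.exp_ofReal_mul_I_im]
    rw [h] at him0
    have : Real.sin (2 * Real.pi / 3) > 0 := by
      apply Real.sin_pos_of_pos_of_lt_pi <;> nlinarith
    simp only [Complex.one_im] at him0
    linarith [him0 ▸ this]
  have hs : 1 + α + α ^ 2 = 0 := by
    have h0 : (α - 1) * (1 + α + α ^ 2) = 0 := by linear_combination h3
    rcases mul_eq_zero.mp h0 with h | h
    · exact absurd (sub_eq_zero.mp h) hαne
    · exact h
  -- coefficient identities
  have e2 : (Complex.I/3)/(α*ζ)^2 = (Complex.I/3)*α/ζ^2 := by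
    rw [div_eq_div_iff (pow_ne_zero 2 (mul_ne_zero hαne0 hζ)) (pow_ne_zero 2 hζ)]
    linear_combination (-(Complex.I/3)*ζ^2) * h3
  have e3 : (Complex.I/3)/(α^2*ζ)^2 = (Complex.I/3)*α^2/ζ^2 := by
    rw [div_eq_div_iff (pow_ne_zero 2 (mul_ne_zero (pow_ne_zero 2 hαne0) hζ))
      (pow_ne_zero 2 hζ)]
    linear_combination (-(Complex.I/3)*ζ^2*(α^3+1)) * h3
  have hc0 : (Complex.I/3)/ζ^2 + (Complex.I/3)/(α*ζ)^2 - (-(Complex.I/3)/(α^2*ζ)^2) = 0 := by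
    rw [e2, neg_div, e3]; field_simp; linear_combination Complex.I * hs
  have hc1 : ((Complex.I/3)/ζ^2)*(Complex.I*ζ) + ((Complex.I/3)/(α*ζ)^2)*(Complex.I*(α*ζ))
      - (-(Complex.I/3)/(α^2*ζ)^2)*(Complex.I*(α^2*ζ)) = 0 := by
    rw [e2, neg_div, e3]; field_simp; ring_nf
    linear_combination Complex.I^2 * hs + Complex.I^2*α * h3
  have hc2 : ((Complex.I/3)/ζ^2)*(Complex.I*ζ)^2
      + ((Complex.I/3)/(α*ζ)^2)*(Complex.I*(α*ζ))^2
      - (-(Complex.I/3)/(α^2*ζ)^2)*(Complex.I*(α^2*ζ))^2 = -Complex.I := by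
    rw [e2, neg_div, e3]; field_simp; ring_nf
    linear_combination (Complex.I^2*(α^3 + 2)) * h3 + 3*Complex.I_sq
  -- the decomposition of u
  obtain ⟨c₁, hc₁⟩ : ∃ c : ℂ, c = (Complex.I/3)/ζ^2 := ⟨_, rfl⟩
  obtain ⟨c₂, hc₂⟩ : ∃ c : ℂ, c = (Complex.I/3)/(α*ζ)^2 := ⟨_, rfl⟩
  obtain ⟨c₃, hc₃⟩ : ∃ c : ℂ, c = -(Complex.I/3)/(α^2*ζ)^2 := ⟨_, rfl⟩
  rw [← hc₁, ← hc₂, ← hc₃] at hc0 hc1 hc2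
  obtain ⟨W₁, hW₁⟩ : ∃ W : ℝ → ℂ, W = fun x => Eker ζ x * Pker f ζ x := ⟨_, rfl⟩
  obtain ⟨W₂, hW₂⟩ : ∃ W : ℝ → ℂ, W = fun x => Eker (α*ζ) x * Pker f (α*ζ) x := ⟨_, rfl⟩
  obtain ⟨W₃, hW₃⟩ : ∃ W : ℝ → ℂ, W = fun x => Eker (α^2*ζ) x * Qker f (α^2*ζ) x := ⟨_, rfl⟩
  obtain ⟨T, hT⟩ : ∃ T : ℝ → ℂ, T = fun x => c₁ * W₁ x + c₂ * W₂ x + c₃ * W₃ x := ⟨_, rfl⟩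
  obtain ⟨T1, hT1⟩ : ∃ T' : ℝ → ℂ, T' = fun x => (c₁ * (Complex.I * ζ)) * W₁ x
      + (c₂ * (Complex.I * (α*ζ))) * W₂ x + (c₃ * (Complex.I * (α^2*ζ))) * W₃ x := ⟨_, rfl⟩
  obtain ⟨T2, hT2⟩ : ∃ T' : ℝ → ℂ, T' = fun x => (c₁ * (Complex.I * ζ)^2) * W₁ x
      + (c₂ * (Complex.I * (α*ζ))^2) * W₂ x + (c₃ * (Complex.I * (α^2*ζ))^2) * W₃ x := ⟨_, rfl⟩
  obtain ⟨T3, hT3⟩ : ∃ T' : ℝ → ℂ, T' = fun x => -Complex.I * ζ^3 * T x - Complex.I * f x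
    := ⟨_, rfl⟩
  have hueq : u = T := by
    funext x
    rw [hT]
    simp only [hW₁, hW₂, hW₃, hc₁, hc₂, hc₃]
    exact (hu x).trans (usplit hf hfc α ζ x)
  have hdT : ∀ x, HasDerivAt T (T1 x) x := by
    intro x
    simp only [hT, hT1, hW₁, hW₂, hW₃]
    have h := (((EP_hasDerivAt hf hfc ζ x).const_mul c₁).add
      ((EP_hasDerivAt hf hfc (α*ζ) x).const_mul c₂)).add
      ((EQ_hasDerivAt hf hfc (α^2*ζ) x).const_mul c₃)
    refine h.congr_deriv (Eq.symm ?_)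
    linear_combination (-(f x)) * hc0
  have hdT1 : ∀ x, HasDerivAt T1 (T2 x) x := by
    intro x
    simp only [hT1, hT2, hW₁, hW₂, hW₃]
    have h := (((EP_hasDerivAt hf hfc ζ x).const_mul (c₁ * (Complex.I * ζ))).add
      ((EP_hasDerivAt hf hfc (α*ζ) x).const_mul (c₂ * (Complex.I * (α*ζ))))).add
      ((EQ_hasDerivAt hf hfc (α^2*ζ) x).const_mul (c₃ * (Complex.I * (α^2*ζ))))
    refine h.congr_deriv (Eq.symm ?_)
    linear_combination (-(f x)) * hc1
  have hdT2 : ∀ x, HasDerivAt T2 (T3 x) x := by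
    intro x
    simp only [hT2, hT3, hT, hW₁, hW₂, hW₃]
    have h := (((EP_hasDerivAt hf hfc ζ x).const_mul (c₁ * (Complex.I * ζ)^2)).add
      ((EP_hasDerivAt hf hfc (α*ζ) x).const_mul (c₂ * (Complex.I * (α*ζ))^2))).add
      ((EQ_hasDerivAt hf hfc (α^2*ζ) x).const_mul (c₃ * (Complex.I * (α^2*ζ))^2))
    refine h.congr_deriv (Eq.symm ?_)
    linear_combination (-(f x)) * hc2
      + (c₂ * (Eker (α*ζ) x * Pker f (α*ζ) x) * ζ^3 * Complex.I
          + c₃ * (Eker (α^2*ζ) x * Qker f (α^2*ζ) x) * ζ^3 * Complex.I * (α^3+1)) * h3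
      + (-(c₁ * (Eker ζ x * Pker f ζ x)) - c₂ * (Eker (α*ζ) x * Pker f (α*ζ) x) * α^3
          - c₃ * (Eker (α^2*ζ) x * Qker f (α^2*ζ) x) * α^6) * ζ^3 * Complex.I * Complex.I_sq
  have hTdiff : Differentiable ℝ T := fun x => (hdT x).differentiableAt
  have hT1diff : Differentiable ℝ T1 := fun x => (hdT1 x).differentiableAt
  have hT2diff : Differentiable ℝ T2 := fun x => (hdT2 x).differentiableAt
  have hdTe : deriv T = T1 := funext fun x => (hdT x).deriv
  have hdT1e : deriv T1 = T2 := funext fun x => (hdT1 x).deriv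
  have hdT2e : deriv T2 = T3 := funext fun x => (hdT2 x).deriv
  have hTcont : Continuous T := hTdiff.continuous
  have hT3cont : Continuous T3 := by
    rw [hT3]
    exact (continuous_const.mul hTcont).sub (continuous_const.mul hf)
  rw [hueq]
  -- support radius
  obtain ⟨r0, hr0⟩ := hfc.isCompact.isBounded.subset_closedBall 0
  set r : ℝ := max r0 0 with hrdef
  have hr : 0 ≤ r := le_max_right _ _
  have hsupp : ∀ y : ℝ, r < |y| → f y = 0 := by
    intro y hy
    apply image_eq_zero_of_notMem_tsupport
    intro hmem
    have h1 := hr0 hmem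
    rw [Metric.mem_closedBall, Real.dist_eq, sub_zero] at h1
    have : |y| ≤ r := le_trans h1 (le_max_left _ _)
    linarith
  have hP0 : ∀ (μ : ℂ) (x : ℝ), x < -r → Pker f μ x = 0 := by
    intro μ x hx
    apply setIntegral_eq_zero_of_forall_eq_zero
    intro y hy
    rw [Set.mem_Iic] at hy
    have hy0 : y < 0 := by linarith
    rw [hsupp y (by rw [abs_of_neg hy0]; linarith), mul_zero]
  have hQ0 : ∀ (μ : ℂ) (x : ℝ), r < x → Qker f μ x = 0 := by
    intro μ x hx
    apply setIntegral_eq_zero_of_forall_eq_zero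
    intro y hy
    rw [Set.mem_Ioi] at hy
    have hy0 : 0 < y := by linarith
    rw [hsupp y (by rw [abs_of_pos hy0]; linarith), mul_zero]
  obtain ⟨M, hM⟩ : ∃ M : ℂ → ℝ,
      M = fun μ => ∫ y : ℝ, ‖Complex.exp (-(Complex.I * μ * y)) * f y‖ := ⟨_, rfl⟩
  have hMnn : ∀ μ, 0 ≤ M μ := fun μ => by
    rw [hM]; exact integral_nonneg fun y => norm_nonneg _
  have hPle : ∀ (μ : ℂ) (x : ℝ), ‖Pker f μ x‖ ≤ M μ := by
    intro μ x
    rw [hM, Pker]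
    refine (norm_integral_le_integral_norm _).trans ?_
    exact setIntegral_le_integral ((gker_integrable hf hfc μ).norm)
      (Filter.Eventually.of_forall fun y => norm_nonneg _)
  have hQle : ∀ (μ : ℂ) (x : ℝ), ‖Qker f μ x‖ ≤ M μ := by
    intro μ x
    rw [hM, Qker]
    refine (norm_integral_le_integral_norm _).trans ?_
    exact setIntegral_le_integral ((gker_integrable hf hfc μ).norm)
      (Filter.Eventually.of_forall fun y => norm_nonneg _)
  obtain ⟨ν₁, hν₁⟩ : ∃ ν : ℝ, ν = ζ.im := ⟨_, rfl⟩
  obtain ⟨ν₂, hν₂⟩ : ∃ ν : ℝ, ν = (α*ζ).im := ⟨_, rfl⟩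
  obtain ⟨ν₃, hν₃⟩ : ∃ ν : ℝ, ν = -((α^2*ζ).im) := ⟨_, rfl⟩
  have hν₁pos : 0 < ν₁ := by rw [hν₁]; exact him1
  have hν₂pos : 0 < ν₂ := by rw [hν₂]; exact him2
  have hν₃pos : 0 < ν₃ := by rw [hν₃]; linarith
  obtain ⟨δ, hδdef⟩ : ∃ d : ℝ, d = min ν₁ (min ν₂ ν₃) := ⟨_, rfl⟩
  have hδ : 0 < δ := by rw [hδdef]; exact lt_min hν₁pos (lt_min hν₂pos hν₃pos)
  have hδ1 : δ ≤ ν₁ := by rw [hδdef]; exact min_le_left _ _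
  have hδ2 : δ ≤ ν₂ := by rw [hδdef]; exact (min_le_right _ _).trans (min_le_left _ _)
  have hδ3 : δ ≤ ν₃ := by rw [hδdef]; exact (min_le_right _ _).trans (min_le_right _ _)
  obtain ⟨S, hS⟩ : ∃ s : ℝ, s = ν₁ + ν₂ + ν₃ := ⟨_, rfl⟩
  have hS1 : ν₁ ≤ S := by rw [hS]; linarith
  have hS2 : ν₂ ≤ S := by rw [hS]; linarith
  have hS3 : ν₃ ≤ S := by rw [hS]; linarith
  obtain ⟨K, hK⟩ : ∃ k : ℝ, k = ‖c₁‖ * M ζ + ‖c₂‖ * M (α*ζ) + ‖c₃‖ * M (α^2*ζ) := ⟨_, rfl⟩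
  obtain ⟨C, hC⟩ : ∃ c : ℝ, c = K * Real.exp (2*S*r) := ⟨_, rfl⟩
  have hKnn : 0 ≤ K := by
    rw [hK]
    exact add_nonneg (add_nonneg (mul_nonneg (norm_nonneg _) (hMnn ζ))
      (mul_nonneg (norm_nonneg _) (hMnn (α*ζ)))) (mul_nonneg (norm_nonneg _) (hMnn (α^2*ζ)))
  have hCnn : 0 ≤ C := by
    rw [hC]
    exact mul_nonneg hKnn (Real.exp_pos _).le
  have hbound : ∀ x : ℝ, ‖T x‖ ≤ C * Real.exp (-δ * |x|) := by
    intro x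
    have hexpnn : (0:ℝ) ≤ Real.exp (2*S*r) * Real.exp (-δ*|x|) :=
      mul_nonneg (Real.exp_pos _).le (Real.exp_pos _).le
    have hb1 : ‖c₁ * W₁ x‖ ≤ ‖c₁‖ * M ζ * (Real.exp (2*S*r) * Real.exp (-δ*|x|)) := by
      rcases lt_or_ge x (-r) with h | h
      · simp only [hW₁]
        rw [hP0 ζ x h, mul_zero, mul_zero, norm_zero]
        exact mul_nonneg (mul_nonneg (norm_nonneg _) (hMnn ζ)) hexpnn
      · simp only [hW₁]
        rw [norm_mul, norm_mul, Eker_norm, ← hν₁]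
        calc ‖c₁‖ * (Real.exp (-ν₁ * x) * ‖Pker f ζ x‖)
            ≤ ‖c₁‖ * ((Real.exp (2*ν₁*r) * Real.exp (-δ*|x|)) * M ζ) := by
              refine mul_le_mul_of_nonneg_left ?_ (norm_nonneg c₁)
              exact mul_le_mul (decayP hν₁pos hδ hδ1 hr h) (hPle ζ x)
                (norm_nonneg _) (mul_nonneg (Real.exp_pos _).le (Real.exp_pos _).le)
          _ ≤ ‖c₁‖ * ((Real.exp (2*S*r) * Real.exp (-δ*|x|)) * M ζ) := by
              have he : Real.exp (2*ν₁*r) ≤ Real.exp (2*S*r) :=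
                Real.exp_le_exp.mpr (mul_le_mul_of_nonneg_right (by linarith [hS1]) hr)
              have h0 : (0:ℝ) ≤ Real.exp (-δ*|x|) := (Real.exp_pos _).le
              exact mul_le_mul_of_nonneg_left (mul_le_mul_of_nonneg_right
                (mul_le_mul_of_nonneg_right he h0) (hMnn _)) (norm_nonneg _)
          _ = ‖c₁‖ * M ζ * (Real.exp (2*S*r) * Real.exp (-δ*|x|)) := by ring
    have hb2 : ‖c₂ * W₂ x‖ ≤ ‖c₂‖ * M (α*ζ) * (Real.exp (2*S*r) * Real.exp (-δ*|x|)) := by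
      rcases lt_or_ge x (-r) with h | h
      · simp only [hW₂]
        rw [hP0 (α*ζ) x h, mul_zero, mul_zero, norm_zero]
        exact mul_nonneg (mul_nonneg (norm_nonneg _) (hMnn (α*ζ))) hexpnn
      · simp only [hW₂]
        rw [norm_mul, norm_mul, Eker_norm, ← hν₂]
        calc ‖c₂‖ * (Real.exp (-ν₂ * x) * ‖Pker f (α*ζ) x‖)
            ≤ ‖c₂‖ * ((Real.exp (2*ν₂*r) * Real.exp (-δ*|x|)) * M (α*ζ)) := by
              refine mul_le_mul_of_nonneg_left ?_ (norm_nonneg c₂)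
              exact mul_le_mul (decayP hν₂pos hδ hδ2 hr h) (hPle (α*ζ) x)
                (norm_nonneg _) (mul_nonneg (Real.exp_pos _).le (Real.exp_pos _).le)
          _ ≤ ‖c₂‖ * ((Real.exp (2*S*r) * Real.exp (-δ*|x|)) * M (α*ζ)) := by
              have he : Real.exp (2*ν₂*r) ≤ Real.exp (2*S*r) :=
                Real.exp_le_exp.mpr (mul_le_mul_of_nonneg_right (by linarith [hS2]) hr)
              have h0 : (0:ℝ) ≤ Real.exp (-δ*|x|) := (Real.exp_pos _).le
              exact mul_le_mul_of_nonneg_left (mul_le_mul_of_nonneg_right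
                (mul_le_mul_of_nonneg_right he h0) (hMnn _)) (norm_nonneg _)
          _ = ‖c₂‖ * M (α*ζ) * (Real.exp (2*S*r) * Real.exp (-δ*|x|)) := by ring
    have hb3 : ‖c₃ * W₃ x‖ ≤ ‖c₃‖ * M (α^2*ζ) * (Real.exp (2*S*r) * Real.exp (-δ*|x|)) := by
      rcases lt_or_ge r x with h | h
      · simp only [hW₃]
        rw [hQ0 (α^2*ζ) x h, mul_zero, mul_zero, norm_zero]
        exact mul_nonneg (mul_nonneg (norm_nonneg _) (hMnn (α^2*ζ))) hexpnn
      · simp only [hW₃]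
        rw [norm_mul, norm_mul, Eker_norm]
        have hex : -(α^2*ζ).im = ν₃ := hν₃.symm
        rw [show (-(α^2*ζ).im * x) = ν₃ * x by rw [hex]]
        calc ‖c₃‖ * (Real.exp (ν₃ * x) * ‖Qker f (α^2*ζ) x‖)
            ≤ ‖c₃‖ * ((Real.exp (2*ν₃*r) * Real.exp (-δ*|x|)) * M (α^2*ζ)) := by
              refine mul_le_mul_of_nonneg_left ?_ (norm_nonneg c₃)
              exact mul_le_mul (decayQ hν₃pos hδ hδ3 hr h) (hQle (α^2*ζ) x)
                (norm_nonneg _) (mul_nonneg (Real.exp_pos _).le (Real.exp_pos _).le)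
          _ ≤ ‖c₃‖ * ((Real.exp (2*S*r) * Real.exp (-δ*|x|)) * M (α^2*ζ)) := by
              have he : Real.exp (2*ν₃*r) ≤ Real.exp (2*S*r) :=
                Real.exp_le_exp.mpr (mul_le_mul_of_nonneg_right (by linarith [hS3]) hr)
              have h0 : (0:ℝ) ≤ Real.exp (-δ*|x|) := (Real.exp_pos _).le
              exact mul_le_mul_of_nonneg_left (mul_le_mul_of_nonneg_right
                (mul_le_mul_of_nonneg_right he h0) (hMnn _)) (norm_nonneg _)
          _ = ‖c₃‖ * M (α^2*ζ) * (Real.exp (2*S*r) * Real.exp (-δ*|x|)) := by ring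
    calc ‖T x‖ ≤ ‖c₁ * W₁ x‖ + ‖c₂ * W₂ x‖ + ‖c₃ * W₃ x‖ := by
          rw [hT]
          exact norm_add₃_le
      _ ≤ C * Real.exp (-δ * |x|) := by
          rw [hC, hK]
          have := add_le_add (add_le_add hb1 hb2) hb3
          calc _ ≤ _ := this
            _ = _ := by ring
  refine ⟨?_, ?_, ?_⟩
  · -- C³
    rw [show (3 : WithTop ℕ∞) = 2 + 1 from rfl, contDiff_succ_iff_deriv]
    refine ⟨hTdiff, by simp, ?_⟩
    rw [hdTe, show (2 : WithTop ℕ∞) = 1 + 1 from rfl, contDiff_succ_iff_deriv]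
    refine ⟨hT1diff, by simp, ?_⟩
    rw [hdT1e, contDiff_one_iff_deriv]
    exact ⟨hT2diff, by rw [hdT2e]; exact hT3cont⟩
  · -- L²
    have hgm : MemLp (fun x : ℝ => C * Real.exp (-δ * |x|)) 2 (volume : Measure ℝ) := by
      rw [memLp_two_iff_integrable_sq (Continuous.aestronglyMeasurable (by fun_prop))]
      have heq : (fun x : ℝ => (C * Real.exp (-δ*|x|))^2)
          = fun x : ℝ => C^2 * Real.exp (-(2*δ)*|x|) := by
        funext x
        rw [mul_pow, pow_two (Real.exp _), ← Real.exp_add,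
          show -δ*|x| + -δ*|x| = -(2*δ)*|x| by ring]
      rw [heq]
      exact (integrable_exp_neg_abs' (by positivity)).const_mul _
    refine MemLp.of_le hgm hTcont.aestronglyMeasurable
      (Filter.Eventually.of_forall fun x => ?_)
    rw [Real.norm_eq_abs, _root_.abs_of_nonneg (mul_nonneg hCnn (Real.exp_pos _).le)]
    exact hbound x
  · -- the ODE
    intro x
    have hit : iteratedDeriv 3 T = T3 := by
      rw [show (3:ℕ) = 2+1 from rfl, iteratedDeriv_succ, show (2:ℕ) = 1+1 from rfl,
        iteratedDeriv_succ, show (1:ℕ) = 0+1 from rfl, iteratedDeriv_succ, iteratedDeriv_zero,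
        hdTe, hdT1e, hdT2e]
    rw [hit, hT3]
    linear_combination (-(ζ^3*(T x)) - f x) * Complex.I_sq
end

section
/- Let α = exp(2πi/3) and let ζ ∈ ℂ with ζ ≠ 0 and 0 ≤ arg ζ ≤ π/3. Define R(x,y;ζ) = (i/3)·(e^{iζ(x−y)}/ζ² + e^{iαζ(x−y)}/(αζ)²) for x ≥ y, and R(x,y;ζ) = −(i/3)·e^{iα²ζ(x−y)}/(α²ζ)² for x < y. Let f : ℝ → ℂ be measurable with ∫_ℝ (1+y²)|f(y)| dy < ∞, ∫_ℝ f(y) dy = 0 and ∫_ℝ y·f(y) dy = 0. Then for every x ∈ ℝ the integral ∫_ℝ R(x,y;ζ)f(y) dy converges absolutely and |∫_ℝ R(x,y;ζ)·f(y) dy| ≤ (2/3)·∫_ℝ (x−y)²·|f(y)| dy; in particular this bound is uniform in ζ throughout the sector. -/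
open Complex MeasureTheory

lemma expTaylor (w : ℂ) (hw : w.re ≤ 0) :
    ‖Complex.exp w - 1 - w‖ ≤ ‖w‖ ^ 2 := by
  have hderiv : ∀ s : ℝ, HasDerivAt (fun u : ℝ => Complex.exp ((u:ℂ) * w)) (w * Complex.exp ((s:ℂ)*w)) s := by
    intro s
    have h1 : HasDerivAt (fun u : ℝ => (u:ℂ) * w) w s := by
      simpa using ((hasDerivAt_id s).ofReal_comp.mul_const w)
    simpa [mul_comm] using h1.cexp
  have step1 : ∀ s ∈ Set.Icc (0:ℝ) 1,
      ‖Complex.exp ((s:ℂ) * w) - 1‖ ≤ ‖w‖ * s := by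
    intro s hs
    have := (convex_Icc (0:ℝ) 1).norm_image_sub_le_of_norm_hasDerivWithin_le
      (f := fun u : ℝ => Complex.exp ((u:ℂ) * w))
      (f' := fun u : ℝ => w * Complex.exp ((u:ℂ)*w)) (C := ‖w‖)
      (fun u _ => (hderiv u).hasDerivWithinAt)
      (fun u hu => by
        rw [norm_mul, Complex.norm_exp]
        have h2 : ((u:ℂ)*w).re = u * w.re := by simp [Complex.mul_re]
        rw [h2]
        have : Real.exp (u * w.re) ≤ 1 := by
          apply Real.exp_le_one_iff.mpr
          exact mul_nonpos_of_nonneg_of_nonpos hu.1 hw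
        nlinarith [norm_nonneg w])
      (Set.left_mem_Icc.mpr one_pos.le) hs
    simpa [_root_.abs_of_nonneg hs.1] using this
  have step2 := (convex_Icc (0:ℝ) 1).norm_image_sub_le_of_norm_hasDerivWithin_le
    (f := fun u : ℝ => Complex.exp ((u:ℂ) * w) - 1 - (u:ℂ)*w)
    (f' := fun u : ℝ => w * Complex.exp ((u:ℂ)*w) - w) (C := ‖w‖ ^ 2)
    (fun u _ => by
      have h1 : HasDerivAt (fun u : ℝ => (u:ℂ) * w) w u := by
        simpa using ((hasDerivAt_id u).ofReal_comp.mul_const w)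
      exact (((hderiv u).sub_const 1).sub h1).hasDerivWithinAt)
    (fun u hu => by
      show ‖w * Complex.exp ((u:ℂ)*w) - w‖ ≤ _
      have h3 : w * Complex.exp ((u:ℂ)*w) - w = w * (Complex.exp ((u:ℂ)*w) - 1) := by ring
      rw [h3, norm_mul]
      calc ‖w‖ * ‖Complex.exp ((u:ℂ)*w) - 1‖
          ≤ ‖w‖ * (‖w‖ * u) :=
            mul_le_mul_of_nonneg_left (step1 u hu) (norm_nonneg w)
        _ ≤ ‖w‖ ^ 2 := by nlinarith [norm_nonneg w, hu.1, hu.2])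
    (Set.left_mem_Icc.mpr one_pos.le) (Set.right_mem_Icc.mpr one_pos.le)
  simpa using step2

lemma Rker_bound (α ζ : ℂ) (hsum : 1 + α + α^2 = 0) (hζ : ζ ≠ 0) (hαne : α ≠ 0)
    (habsα : ‖α‖ = 1)
    (him0 : 0 ≤ ζ.im) (him1 : 0 ≤ (α*ζ).im) (him2 : (α^2*ζ).im ≤ 0) (x y : ℝ) :
    ‖Rker α ζ x y - (-(Complex.I * α^2) / (3*ζ^2)) - (α/(3*ζ)) * ((x:ℂ) - y)‖
      ≤ 2/3 * (x-y)^2 := by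
  have hI := Complex.I_sq
  have hz2 : (0:ℝ) < ‖ζ‖ ^ 2 := pow_pos (norm_pos_iff.mpr hζ) 2
  set t : ℝ := x - y with ht
  have hc : ((x:ℂ) - y) = (t:ℂ) := by rw [ht, Complex.ofReal_sub]
  set d : ℝ := ‖Rker α ζ x y - (-(Complex.I * α^2) / (3*ζ^2))
    - (α/(3*ζ)) * ((x:ℂ) - y)‖ with hd
  have hd0 : 0 ≤ d := norm_nonneg _
  have htt : (x - y)^2 = t^2 := by rw [ht]
  rw [htt]
  by_cases h : y ≤ x
  · have hw1re : (Complex.I * ζ * ((x:ℂ) - y)).re ≤ 0 := by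
      rw [hc]
      have h5 : (Complex.I * ζ * (t:ℂ)).re = -ζ.im * t := by
        simp [Complex.mul_re, Complex.mul_im]
      rw [h5]
      have ht0 : 0 ≤ t := ht ▸ sub_nonneg.mpr h
      nlinarith
    have hw2re : (Complex.I * α * ζ * ((x:ℂ) - y)).re ≤ 0 := by
      rw [hc]
      have h4 : Complex.I * α * ζ * (t:ℂ) = Complex.I * (α * ζ * (t:ℂ)) := by ring
      rw [h4, Complex.I_mul_re]
      have h5 : (α * ζ * (t:ℂ)).im = (α*ζ).im * t := by simp [Complex.mul_im]
      rw [h5]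
      have ht0 : 0 ≤ t := ht ▸ sub_nonneg.mpr h
      nlinarith
    have hb1 : ‖Complex.exp (Complex.I * ζ * ((x:ℂ) - y)) - 1
          - Complex.I * ζ * ((x:ℂ) - y)‖ ≤ ‖ζ‖ ^ 2 * t ^ 2 := by
      refine (expTaylor _ hw1re).trans (le_of_eq ?_)
      have h6 : ‖Complex.I * ζ * ((x:ℂ) - y)‖ = ‖ζ‖ * |t| := by
        rw [hc]; simp [map_mul, Complex.norm_I, Complex.norm_real]
      rw [h6, mul_pow, _root_.sq_abs]
    have hb2 : ‖Complex.exp (Complex.I * α * ζ * ((x:ℂ) - y)) - 1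
          - Complex.I * α * ζ * ((x:ℂ) - y)‖ ≤ ‖ζ‖ ^ 2 * t ^ 2 := by
      refine (expTaylor _ hw2re).trans (le_of_eq ?_)
      have h6 : ‖Complex.I * α * ζ * ((x:ℂ) - y)‖ = ‖ζ‖ * |t| := by
        rw [hc]; simp [map_mul, Complex.norm_I, Complex.norm_real, habsα]
      rw [h6, mul_pow, _root_.sq_abs]
    have hid : (3*α^2*ζ^2) * (Rker α ζ x y - (-(Complex.I * α^2) / (3*ζ^2)) - (α/(3*ζ)) * ((x:ℂ) - y))
        = Complex.I*α^2*(Complex.exp (Complex.I * ζ * ((x:ℂ) - y)) - 1 - Complex.I*ζ*((x:ℂ) - y))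
          + Complex.I*(Complex.exp (Complex.I * α * ζ * ((x:ℂ) - y)) - 1
            - Complex.I*α*ζ*((x:ℂ) - y)) := by
      rw [Rker, if_pos h, mul_sub, mul_sub]
      have hD : (3 * (ζ ^ 2 * (α * ζ) ^ 2) * (3 * ζ ^ 2) : ℂ) ≠ 0 := by
        simp [hζ, hαne]
      have key : (3*α^2*ζ^2) * ((Complex.I / 3) * (Complex.exp (Complex.I * ζ * ((x:ℂ) - y)) / ζ ^ 2
          + Complex.exp (Complex.I * α * ζ * ((x:ℂ) - y)) / (α * ζ) ^ 2)
          - (-(Complex.I * α^2) / (3*ζ^2)) - (α/(3*ζ)) * ((x:ℂ) - y))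
          = Complex.I*α^2*Complex.exp (Complex.I * ζ * ((x:ℂ) - y))
            + Complex.I*Complex.exp (Complex.I * α * ζ * ((x:ℂ) - y))
            + Complex.I*α^4 - α^3*ζ*((x:ℂ) - y) := by
        field_simp
        ring
      linear_combination key + (Complex.I*(α^2-α+1) - α*ζ*((x:ℂ) - y)) * hsum
        + (α^2+α)*ζ*((x:ℂ) - y) * hI
    have habsD : ‖(3*α^2*ζ^2 : ℂ)‖ = 3 * ‖ζ‖ ^ 2 := by
      simp [map_mul, map_pow, habsα]
    have hchain : 3 * ‖ζ‖ ^ 2 * d ≤ 2 * (‖ζ‖ ^ 2 * t ^ 2) := by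
      rw [hd, ← habsD, ← norm_mul, hid]
      calc ‖_‖
          ≤ ‖Complex.I*α^2*(Complex.exp (Complex.I * ζ * ((x:ℂ) - y)) - 1
              - Complex.I*ζ*((x:ℂ) - y))‖
            + ‖Complex.I*(Complex.exp (Complex.I * α * ζ * ((x:ℂ) - y)) - 1
              - Complex.I*α*ζ*((x:ℂ) - y))‖ := norm_add_le _ _
        _ = ‖Complex.exp (Complex.I * ζ * ((x:ℂ) - y)) - 1 - Complex.I*ζ*((x:ℂ) - y)‖
            + ‖Complex.exp (Complex.I * α * ζ * ((x:ℂ) - y)) - 1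
              - Complex.I*α*ζ*((x:ℂ) - y)‖ := by
            simp [map_mul, map_pow, Complex.norm_I, habsα]
        _ ≤ 2 * (‖ζ‖ ^ 2 * t ^ 2) := by linarith
    nlinarith
  · have hw3re : (Complex.I * α^2 * ζ * ((x:ℂ) - y)).re ≤ 0 := by
      rw [hc]
      have h4 : Complex.I * α^2 * ζ * (t:ℂ) = Complex.I * (α^2 * ζ * (t:ℂ)) := by ring
      rw [h4, Complex.I_mul_re]
      have h5 : (α^2 * ζ * (t:ℂ)).im = (α^2*ζ).im * t := by simp [Complex.mul_im]
      rw [h5]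
      have ht0 : t ≤ 0 := le_of_lt (ht ▸ sub_neg.mpr (lt_of_not_ge h))
      nlinarith
    have hb3 : ‖Complex.exp (Complex.I * α^2 * ζ * ((x:ℂ) - y)) - 1
          - Complex.I * α^2 * ζ * ((x:ℂ) - y)‖ ≤ ‖ζ‖ ^ 2 * t ^ 2 := by
      refine (expTaylor _ hw3re).trans (le_of_eq ?_)
      have h6 : ‖Complex.I * α^2 * ζ * ((x:ℂ) - y)‖ = ‖ζ‖ * |t| := by
        rw [hc]; simp [map_mul, map_pow, Complex.norm_I, Complex.norm_real, habsα]
      rw [h6, mul_pow, _root_.sq_abs]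
    have hid : (3*α*ζ^2) * (Rker α ζ x y - (-(Complex.I * α^2) / (3*ζ^2)) - (α/(3*ζ)) * ((x:ℂ) - y))
        = -Complex.I*(Complex.exp (Complex.I * α^2 * ζ * ((x:ℂ) - y)) - 1
            - Complex.I*α^2*ζ*((x:ℂ) - y)) := by
      rw [Rker, if_neg h, mul_sub, mul_sub]
      have hD : (3 * (α ^ 2 * ζ) ^ 2 * (3 * ζ ^ 2) : ℂ) ≠ 0 := by
        simp [hζ, hαne]
      have hα3 : α^3 = 1 := by linear_combination (α - 1) * hsum
      have hα4 : (α^2*ζ)^2 = α*ζ^2 := by linear_combination α*ζ^2*hα3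
      have key : (3*α*ζ^2) * (-(Complex.I / 3) * Complex.exp (Complex.I * α ^ 2 * ζ * ((x:ℂ) - y))
          / (α ^ 2 * ζ) ^ 2 - (-(Complex.I * α^2) / (3*ζ^2)) - (α/(3*ζ)) * ((x:ℂ) - y))
          = -Complex.I*Complex.exp (Complex.I * α ^ 2 * ζ * ((x:ℂ) - y))
            + Complex.I*α^3 - α^2*ζ*((x:ℂ) - y) := by
        rw [hα4]
        field_simp
        ring
      linear_combination key + Complex.I * hα3 - α^2*ζ*((x:ℂ) - y) * hI
    have habsD : ‖(3*α*ζ^2 : ℂ)‖ = 3 * ‖ζ‖ ^ 2 := by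
      simp [map_mul, map_pow, habsα]
    have hchain : 3 * ‖ζ‖ ^ 2 * d ≤ ‖ζ‖ ^ 2 * t ^ 2 := by
      rw [hd, ← habsD, ← norm_mul, hid]
      calc ‖_‖
          = ‖Complex.exp (Complex.I * α^2 * ζ * ((x:ℂ) - y)) - 1
              - Complex.I*α^2*ζ*((x:ℂ) - y)‖ := by
            rw [show (-Complex.I*(Complex.exp (Complex.I * α^2 * ζ * ((x:ℂ) - y)) - 1
              - Complex.I*α^2*ζ*((x:ℂ) - y))) = Complex.I*(-(Complex.exp (Complex.I * α^2 * ζ * ((x:ℂ) - y)) - 1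
              - Complex.I*α^2*ζ*((x:ℂ) - y))) from by ring, norm_mul, Complex.norm_I, one_mul, norm_neg]
        _ ≤ ‖ζ‖ ^ 2 * t ^ 2 := hb3
    nlinarith

/-- for `α = exp(2πi/3)`, `ζ ≠ 0` with `0 ≤ arg ζ ≤ π/3`, and `f` in the
weighted `L¹` space with vanishing zeroth and first moments, for every `x` the integral
`∫ R(x,y;ζ)f(y) dy` converges absolutely and
`|∫ R(x,y;ζ)f(y) dy| ≤ (2/3)∫ (x−y)²|f(y)| dy`, uniformly in `ζ`. -/
theorem stmt18 (α : ℂ) (hα : α = Complex.exp (2 * Real.pi * Complex.I / 3))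
    (ζ : ℂ) (hζ : ζ ≠ 0) (harg₀ : 0 ≤ ζ.arg) (harg₁ : ζ.arg ≤ Real.pi / 3)
    (f : ℝ → ℂ) (hfmeas : Measurable f)
    (hf : Integrable (fun y : ℝ => (1 + y ^ 2) * ‖f y‖))
    (hmom₀ : ∫ y : ℝ, f y = 0)
    (hmom₁ : ∫ y : ℝ, (y : ℂ) * f y = 0) :
    ∀ x : ℝ, Integrable (fun y : ℝ => Rker α ζ x y * f y) ∧
      ‖∫ y : ℝ, Rker α ζ x y * f y‖ ≤
        (2 / 3) * ∫ y : ℝ, (x - y) ^ 2 * ‖f y‖ := by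
  have hπ := Real.pi_pos
  have hαform : α = Complex.exp (((2*Real.pi/3 : ℝ) : ℂ) * Complex.I) := by
    rw [hα]; congr 1; push_cast; ring
  have hαne : α ≠ 0 := hα ▸ Complex.exp_ne_zero _
  have habsα : ‖α‖ = 1 := by
    rw [hαform]; exact Complex.norm_exp_ofReal_mul_I _
  have hα3 : α^3 = 1 := by
    rw [hα, ← Complex.exp_nat_mul]
    rw [show ((3:ℕ):ℂ)*(2*Real.pi*Complex.I/3) = 2*Real.pi*Complex.I from by push_cast; ring]
    exact Complex.exp_two_pi_mul_I
  have hαim : α.im = Real.sin (2*Real.pi/3) := by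
    rw [hαform]; exact Complex.exp_ofReal_mul_I_im _
  have hsin23 : 0 < Real.sin (2*Real.pi/3) :=
    Real.sin_pos_of_pos_of_lt_pi (by positivity) (by linarith)
  have hαne1 : α ≠ 1 := by
    intro hh
    rw [hh] at hαim
    simp at hαim
    linarith [hαim ▸ hsin23]
  have hsum : 1 + α + α^2 = 0 := by
    rcases mul_eq_zero.mp (show (α - 1)*(1+α+α^2) = 0 from by linear_combination hα3) with h|h
    · exact absurd (sub_eq_zero.mp h) hαne1
    · exact h
  have him0 : 0 ≤ ζ.im := Complex.arg_nonneg_iff.mp harg₀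
  have hζform : ζ = (‖ζ‖ : ℂ) * Complex.exp ((ζ.arg : ℂ) * Complex.I) :=
    (Complex.norm_mul_exp_arg_mul_I ζ).symm
  have him1 : 0 ≤ (α*ζ).im := by
    have hform : α*ζ = (‖ζ‖ : ℂ)
        * Complex.exp (((2*Real.pi/3 + ζ.arg : ℝ) : ℂ) * Complex.I) := by
      conv_lhs => rw [hαform, hζform]
      rw [mul_comm (Complex.exp _), mul_assoc, ← Complex.exp_add]
      congr 2
      push_cast; ring
    rw [hform]
    rw [show ((‖ζ‖ : ℂ) * Complex.exp (((2*Real.pi/3 + ζ.arg : ℝ) : ℂ) * Complex.I)).im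
      = ‖ζ‖ * (Complex.exp (((2*Real.pi/3 + ζ.arg : ℝ) : ℂ) * Complex.I)).im from by
        simp [Complex.mul_im]]
    rw [Complex.exp_ofReal_mul_I_im]
    have : 0 ≤ Real.sin (2*Real.pi/3 + ζ.arg) :=
      Real.sin_nonneg_of_nonneg_of_le_pi (by linarith) (by linarith)
    positivity
  have him2 : (α^2*ζ).im ≤ 0 := by
    have hα2form : α^2 = Complex.exp (((4*Real.pi/3 : ℝ) : ℂ) * Complex.I) := by
      rw [hαform, ← Complex.exp_nat_mul]
      congr 1
      push_cast; ring
    have hform : α^2*ζ = (‖ζ‖ : ℂ)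
        * Complex.exp (((4*Real.pi/3 + ζ.arg : ℝ) : ℂ) * Complex.I) := by
      conv_lhs => rw [hα2form, hζform]
      rw [mul_comm (Complex.exp _), mul_assoc, ← Complex.exp_add]
      congr 2
      push_cast; ring
    rw [hform]
    rw [show ((‖ζ‖ : ℂ) * Complex.exp (((4*Real.pi/3 + ζ.arg : ℝ) : ℂ) * Complex.I)).im
      = ‖ζ‖ * (Complex.exp (((4*Real.pi/3 + ζ.arg : ℝ) : ℂ) * Complex.I)).im from by
        simp [Complex.mul_im]]
    rw [Complex.exp_ofReal_mul_I_im]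
    have hs : Real.sin (4*Real.pi/3 + ζ.arg) ≤ 0 := by
      have h1 : Real.sin (4*Real.pi/3 + ζ.arg) = -Real.sin (Real.pi/3 + ζ.arg) := by
        rw [show 4*Real.pi/3 + ζ.arg = (Real.pi/3 + ζ.arg) + Real.pi from by ring]
        exact Real.sin_add_pi _
      rw [h1, neg_nonpos]
      exact Real.sin_nonneg_of_nonneg_of_le_pi (by linarith) (by linarith)
    have := norm_nonneg ζ
    nlinarith
  intro x
  set a : ℂ := -(Complex.I * α^2) / (3*ζ^2) with ha
  set b : ℂ := α / (3*ζ) with hb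
  have hbnd : ∀ y : ℝ, ‖Rker α ζ x y - a - b * ((x:ℂ) - y)‖ ≤ 2/3*(x-y)^2 :=
    fun y => Rker_bound α ζ hsum hζ hαne habsα him0 him1 him2 x y
  have hRmeas : Measurable (fun y : ℝ => Rker α ζ x y) := by
    unfold Rker
    refine Measurable.ite (measurableSet_le measurable_id measurable_const) ?_ ?_
    · fun_prop
    · fun_prop
  have hKmeas : Measurable (fun y : ℝ => Rker α ζ x y - a - b * ((x:ℂ) - y)) := by
    fun_prop
  have habsf : Measurable (fun y : ℝ => ‖f y‖) :=
    continuous_norm.measurable.comp hfmeas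
  have hfa : Integrable (fun y : ℝ => f y) := by
    refine hf.mono' hfmeas.aestronglyMeasurable (ae_of_all _ fun y => ?_)
    nlinarith [norm_nonneg (f y), sq_nonneg y]
  have hyf : Integrable (fun y : ℝ => (y:ℂ) * f y) := by
    refine hf.mono' ((Complex.measurable_ofReal.mul hfmeas).aestronglyMeasurable) (ae_of_all _ fun y => ?_)
    rw [norm_mul, Complex.norm_real, Real.norm_eq_abs]
    have h1 : |y| ≤ 1 + y^2 := by nlinarith [abs_nonneg y, _root_.sq_abs y]
    nlinarith [norm_nonneg (f y)]
  have hsq : Integrable (fun y : ℝ => (x - y)^2 * ‖f y‖) := by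
    refine (hf.const_mul (2 + 2*x^2)).mono'
      (((continuous_const.sub continuous_id).pow 2).measurable.mul habsf).aestronglyMeasurable
      (ae_of_all _ fun y => ?_)
    rw [Real.norm_eq_abs, abs_mul, _root_.abs_of_nonneg (sq_nonneg _),
      _root_.abs_of_nonneg (norm_nonneg _)]
    have h1 : (x-y)^2 ≤ (2+2*x^2)*(1+y^2) := by nlinarith [sq_nonneg (x+y), sq_nonneg (x*y)]
    nlinarith [norm_nonneg (f y)]
  have hK : Integrable (fun y : ℝ => (Rker α ζ x y - a - b*((x:ℂ)-y)) * f y) := by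
    refine (hsq.const_mul (2/3)).mono' ((hKmeas.mul hfmeas).aestronglyMeasurable)
      (ae_of_all _ fun y => ?_)
    rw [norm_mul]
    have h2 : (0:ℝ) ≤ ‖f y‖ := norm_nonneg _
    calc ‖Rker α ζ x y - a - b*((x:ℂ)-y)‖ * ‖f y‖
        ≤ (2/3*(x-y)^2) * ‖f y‖ := mul_le_mul_of_nonneg_right (hbnd y) h2
      _ = 2/3 * ((x-y)^2 * ‖f y‖) := by ring
  have hlin : Integrable (fun y : ℝ => (a + b*((x:ℂ) - y)) * f y) := by
    have h3 : (fun y : ℝ => (a + b*((x:ℂ) - y)) * f y)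
        = fun y => (a + b*(x:ℂ)) * f y - b * ((y:ℂ) * f y) := by
      funext y; ring
    rw [h3]
    exact (hfa.const_mul _).sub (hyf.const_mul b)
  have hsplit : (fun y : ℝ => Rker α ζ x y * f y)
      = fun y => (Rker α ζ x y - a - b*((x:ℂ)-y)) * f y + (a + b*((x:ℂ) - y)) * f y := by
    funext y; ring
  have hRf : Integrable (fun y : ℝ => Rker α ζ x y * f y) := by
    rw [hsplit]; exact hK.add hlin
  refine ⟨hRf, ?_⟩
  have hint0 : ∫ y : ℝ, (a + b*((x:ℂ) - y)) * f y = 0 := by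
    have h3 : (fun y : ℝ => (a + b*((x:ℂ) - y)) * f y)
        = fun y => (a + b*(x:ℂ)) * f y - b * ((y:ℂ) * f y) := by funext y; ring
    rw [h3, integral_sub (hfa.const_mul _) (hyf.const_mul b), integral_const_mul,
      integral_const_mul, hmom₀, hmom₁]
    simp
  have heq : ∫ y : ℝ, Rker α ζ x y * f y
      = ∫ y : ℝ, (Rker α ζ x y - a - b*((x:ℂ)-y)) * f y := by
    rw [hsplit, integral_add hK hlin, hint0, add_zero]
  rw [heq]
  calc ‖∫ y : ℝ, (Rker α ζ x y - a - b*((x:ℂ)-y)) * f y‖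
      ≤ ∫ y : ℝ, 2/3 * ((x - y)^2 * ‖f y‖) := by
        refine norm_integral_le_of_norm_le (hsq.const_mul (2/3)) (ae_of_all _ fun y => ?_)
        rw [norm_mul]
        have h2 : (0:ℝ) ≤ ‖f y‖ := norm_nonneg _
        calc ‖Rker α ζ x y - a - b*((x:ℂ)-y)‖ * ‖f y‖
            ≤ (2/3*(x-y)^2) * ‖f y‖ := mul_le_mul_of_nonneg_right (hbnd y) h2
          _ = 2/3 * ((x-y)^2 * ‖f y‖) := by ring
    _ = (2/3) * ∫ y : ℝ, (x - y)^2 * ‖f y‖ := integral_const_mul _ _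
end

section
/- For every ε > 0 there exist a real number κ with 0 < κ < ε, a continuous function V : ℝ → ℝ with V(x) = 0 for all |x| ≥ 1 and sup_{x∈ℝ} |V(x)| < ε, and a function u : ℝ → ℝ which is three times continuously differentiable, square integrable on ℝ, and not identically zero, such that −u'''(x) + V(x)·u(x) = κ³·u(x) for all x ∈ ℝ. In other words, arbitrarily small continuous compactly supported potentials produce an eigenvalue κ³ ≠ 0 of the operator −d³/dx³ + V arbitrarily close to zero. -/
open MeasureTheory Set
open scoped ContDiff

namespace S19
noncomputable section

def sq3 : ℝ := Real.sqrt 3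

def ca : ℂ := (1/2 : ℝ) + (sq3/2 : ℝ) * Complex.I

lemma ca_re : ca.re = 1/2 := by simp [ca]
lemma ca_im : ca.im = sq3/2 := by simp [ca]

lemma sq3_sq : sq3 ^ 2 = 3 := Real.sq_sqrt (by norm_num)

lemma ca_abs : ‖ca‖ = 1 := by
  rw [Complex.norm_def, Complex.normSq_apply, ca_re, ca_im]
  rw [show (1/2 : ℝ) * (1/2) + sq3/2 * (sq3/2) = (1/4 + sq3^2/4) by ring, sq3_sq]
  norm_num

lemma ca_cube : ca ^ 3 = -1 := by
  have hs := sq3_sq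
  apply Complex.ext <;>
    simp only [pow_succ, pow_zero, one_mul, Complex.mul_re, Complex.mul_im, ca_re, ca_im,
      Complex.neg_re, Complex.neg_im, Complex.one_re, Complex.one_im]
  · linear_combination (-(3:ℝ)/8) * hs
  · linear_combination (-sq3/8) * hs


def lam (k : ℝ) : ℂ := (k : ℂ) * ca

lemma lam_cube (k : ℝ) : lam k ^ 3 = -((k:ℂ))^3 := by
  rw [lam, mul_pow, ca_cube]; ring

lemma lam_mul_ofReal (k x : ℝ) : lam k * (x:ℂ) = ((k*x : ℝ):ℂ) * ca := by
  rw [lam]; push_cast; ring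

lemma lam_mul_re (k x : ℝ) : (lam k * (x:ℂ)).re = k * x / 2 := by
  rw [lam_mul_ofReal, Complex.re_ofReal_mul, ca_re]; ring

lemma abs_lam_mul (k x : ℝ) (hk : 0 ≤ k) : ‖lam k * (x:ℂ)‖ = k * |x| := by
  rw [lam_mul_ofReal, norm_mul, ca_abs, Complex.norm_real, Real.norm_eq_abs, abs_mul, abs_of_nonneg hk, mul_one]

/-- basic exponential-type building block -/
def E (k : ℝ) (c : ℂ) (x : ℝ) : ℝ := (c * Complex.exp (lam k * x)).re

lemma hasDerivAt_E (k : ℝ) (c : ℂ) (x : ℝ) :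
    HasDerivAt (E k c) (E k (c * lam k) x) x := by
  have h0 : HasDerivAt (fun y : ℝ => (y : ℂ)) (Complex.ofRealCLM 1) x :=
    Complex.ofRealCLM.hasDerivAt
  have h1 : HasDerivAt (fun y : ℝ => lam k * (y:ℂ)) (lam k) x := by
    simpa using h0.const_mul (lam k)
  have h3 := (h1.cexp).const_mul c
  have h4 := Complex.reCLM.hasFDerivAt.comp_hasDerivAt x h3
  have : Complex.reCLM (c * (Complex.exp (lam k * x) * lam k)) = E k (c * lam k) x := by
    simp [E]; ring_nf
  rw [this] at h4
  exact h4


def chi (x : ℝ) : ℝ := Real.smoothTransition (1/2 - x)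

lemma chi_contDiff : ContDiff ℝ ∞ chi :=
  Real.smoothTransition.contDiff.comp (contDiff_const.sub contDiff_id)

def chi1 : ℝ → ℝ := deriv chi
def chi2 : ℝ → ℝ := deriv chi1
def chi3 : ℝ → ℝ := deriv chi2

lemma chi1_contDiff : ContDiff ℝ ∞ chi1 := (contDiff_infty_iff_deriv.mp chi_contDiff).2
lemma chi2_contDiff : ContDiff ℝ ∞ chi2 := (contDiff_infty_iff_deriv.mp chi1_contDiff).2
lemma chi3_contDiff : ContDiff ℝ ∞ chi3 := (contDiff_infty_iff_deriv.mp chi2_contDiff).2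

lemma hasDerivAt_chi (x : ℝ) : HasDerivAt chi (chi1 x) x :=
  (chi_contDiff.differentiable (by simp) x).hasDerivAt
lemma hasDerivAt_chi1 (x : ℝ) : HasDerivAt chi1 (chi2 x) x :=
  (chi1_contDiff.differentiable (by simp) x).hasDerivAt
lemma hasDerivAt_chi2 (x : ℝ) : HasDerivAt chi2 (chi3 x) x :=
  (chi2_contDiff.differentiable (by simp) x).hasDerivAt

lemma chi_nonneg (x : ℝ) : 0 ≤ chi x := Real.smoothTransition.nonneg _
lemma chi_le_one (x : ℝ) : chi x ≤ 1 := Real.smoothTransition.le_one _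

lemma chi_eq_one {x : ℝ} (hx : x ≤ -(1/2)) : chi x = 1 :=
  Real.smoothTransition.one_of_one_le (by linarith)

lemma chi_eq_zero {x : ℝ} (hx : (1:ℝ)/2 ≤ x) : chi x = 0 :=
  Real.smoothTransition.zero_of_nonpos (by linarith)

lemma deriv_const_on {f : ℝ → ℝ} {U : Set ℝ} (hU : IsOpen U) {c : ℝ}
    (h : ∀ y ∈ U, f y = c) : ∀ y ∈ U, deriv f y = 0 := by
  intro y hy
  have he : f =ᶠ[nhds y] fun _ => c :=
    Filter.eventuallyEq_of_mem (hU.mem_nhds hy) h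
  rw [he.deriv_eq, deriv_const]

lemma chi_derivs_zero {x : ℝ} (hx : (1:ℝ)/2 < |x|) :
    chi1 x = 0 ∧ chi2 x = 0 ∧ chi3 x = 0 := by
  rcases lt_abs.mp hx with h | h
  · -- x > 1/2, chi = 0 on Ioi (1/2)
    have hU : IsOpen (Ioi ((1:ℝ)/2)) := isOpen_Ioi
    have h0 : ∀ y ∈ Ioi ((1:ℝ)/2), chi y = 0 := fun y hy => chi_eq_zero (le_of_lt hy)
    have h1 := deriv_const_on hU h0
    have h2 := deriv_const_on hU h1
    have h3 := deriv_const_on hU h2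
    exact ⟨h1 x h, h2 x h, h3 x h⟩
  · -- -x > 1/2, i.e. x < -1/2
    have hx' : x ∈ Iio (-(1:ℝ)/2) := by simp only [mem_Iio]; linarith
    have hU : IsOpen (Iio (-(1:ℝ)/2)) := isOpen_Iio
    have h0 : ∀ y ∈ Iio (-(1:ℝ)/2), chi y = 1 := fun y hy => chi_eq_one (by
      simp only [mem_Iio] at hy; linarith)
    have h1 := deriv_const_on hU h0
    have h2 := deriv_const_on hU h1
    have h3 := deriv_const_on hU h2
    exact ⟨h1 x hx', h2 x hx', h3 x hx'⟩


variable (k : ℝ)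

def R0 (x : ℝ) : ℝ := Real.exp (-(k * x))
def D0 (x : ℝ) : ℝ := E k 1 x - R0 k x
def D1 (x : ℝ) : ℝ := E k (lam k) x + k * R0 k x
def D2 (x : ℝ) : ℝ := E k (lam k ^ 2) x - k^2 * R0 k x
def u0 (x : ℝ) : ℝ := R0 k x + chi x * D0 k x
def u1 (x : ℝ) : ℝ := -(k * R0 k x) + chi1 x * D0 k x + chi x * D1 k x
def u2 (x : ℝ) : ℝ := k^2 * R0 k x + chi2 x * D0 k x + 2*(chi1 x * D1 k x) + chi x * D2 k x
def u3 (x : ℝ) : ℝ := -(k^3 * R0 k x) + chi3 x * D0 k x + 3*(chi2 x * D1 k x)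
  + 3*(chi1 x * D2 k x) + chi x * (-(k^3 * D0 k x))
def W (x : ℝ) : ℝ := chi3 x * D0 k x + 3*(chi2 x * D1 k x) + 3*(chi1 x * D2 k x)

lemma hasDerivAt_R0 (x : ℝ) : HasDerivAt (R0 k) (-(k * R0 k x)) x := by
  have h := (((hasDerivAt_id x).const_mul k).neg).exp
  have h' : HasDerivAt (fun x => Real.exp (-(k * x))) (-(k * Real.exp (-(k * x)))) x := by
    simpa [mul_comm] using h
  exact h'

lemma E_cube (x : ℝ) : E k (lam k ^ 2 * lam k) x = -(k^3 * E k 1 x) := by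
  have h : lam k ^ 2 * lam k = ((-(k^3) : ℝ) : ℂ) := by
    rw [← pow_succ, lam_cube]; push_cast; ring
  rw [h]
  simp only [E, one_mul, Complex.re_ofReal_mul]
  ring

lemma hasDerivAt_D0 (x : ℝ) : HasDerivAt (D0 k) (D1 k x) x := by
  have h := (hasDerivAt_E k 1 x).sub (hasDerivAt_R0 k x)
  have he : E k (1 * lam k) x - -(k * R0 k x) = D1 k x := by
    rw [one_mul, D1]; ring
  rw [he] at h; exact h

lemma hasDerivAt_D1 (x : ℝ) : HasDerivAt (D1 k) (D2 k x) x := by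
  have h := (hasDerivAt_E k (lam k) x).add ((hasDerivAt_R0 k x).const_mul k)
  have he : E k (lam k * lam k) x + k * -(k * R0 k x) = D2 k x := by
    rw [← pow_two, D2]; ring
  rw [he] at h; exact h

lemma hasDerivAt_D2 (x : ℝ) : HasDerivAt (D2 k) (-(k^3 * D0 k x)) x := by
  have h := (hasDerivAt_E k (lam k ^ 2) x).sub (((hasDerivAt_R0 k x).const_mul (k^2)))
  have he : E k (lam k ^ 2 * lam k) x - k^2 * -(k * R0 k x) = -(k^3 * D0 k x) := by
    rw [E_cube, D0]; ring
  rw [he] at h; exact h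

lemma hasDerivAt_u0 (x : ℝ) : HasDerivAt (u0 k) (u1 k x) x := by
  have h := (hasDerivAt_R0 k x).add ((hasDerivAt_chi x).mul (hasDerivAt_D0 k x))
  have he : -(k * R0 k x) + (chi1 x * D0 k x + chi x * D1 k x) = u1 k x := by
    rw [u1]; ring
  rw [he] at h; exact h

lemma hasDerivAt_u1 (x : ℝ) : HasDerivAt (u1 k) (u2 k x) x := by
  have h := ((((hasDerivAt_R0 k x).const_mul k).neg).add
    ((hasDerivAt_chi1 x).mul (hasDerivAt_D0 k x))).add
      ((hasDerivAt_chi x).mul (hasDerivAt_D1 k x))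
  have he : -(k * -(k * R0 k x)) + (chi2 x * D0 k x + chi1 x * D1 k x)
      + (chi1 x * D1 k x + chi x * D2 k x) = u2 k x := by
    rw [u2]; ring
  rw [he] at h
  exact h

lemma hasDerivAt_u2 (x : ℝ) : HasDerivAt (u2 k) (u3 k x) x := by
  have h := (((((hasDerivAt_R0 k x).const_mul (k^2))).add
    ((hasDerivAt_chi2 x).mul (hasDerivAt_D0 k x))).add
      ((((hasDerivAt_chi1 x).mul (hasDerivAt_D1 k x)).const_mul 2))).add
        ((hasDerivAt_chi x).mul (hasDerivAt_D2 k x))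
  have he : k^2 * -(k * R0 k x) + (chi3 x * D0 k x + chi2 x * D1 k x)
      + 2*(chi2 x * D1 k x + chi1 x * D2 k x)
      + (chi1 x * D2 k x + chi x * -(k^3 * D0 k x)) = u3 k x := by
    rw [u3]; ring
  rw [he] at h
  exact h

lemma iter3 : iteratedDeriv 3 (u0 k) = u3 k := by
  have h1 : deriv (u0 k) = u1 k := funext fun x => (hasDerivAt_u0 k x).deriv
  have h2 : deriv (u1 k) = u2 k := funext fun x => (hasDerivAt_u1 k x).deriv
  have h3 : deriv (u2 k) = u3 k := funext fun x => (hasDerivAt_u2 k x).deriv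
  rw [show (3:ℕ) = 2 + 1 from rfl, iteratedDeriv_succ,
    show (2:ℕ) = 1 + 1 from rfl, iteratedDeriv_succ, iteratedDeriv_one, h1, h2, h3]

lemma contDiff_E (c : ℂ) : ContDiff ℝ 3 (E k c) := by
  have h1 : ContDiff ℝ 3 (fun x : ℝ => lam k * (x:ℂ)) :=
    contDiff_const.mul Complex.ofRealCLM.contDiff
  have h2 : ContDiff ℝ 3 (fun x : ℝ => c * Complex.exp (lam k * (x:ℂ))) :=
    contDiff_const.mul (Complex.contDiff_exp.comp h1)
  exact Complex.reCLM.contDiff.comp h2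

lemma contDiff_R0 : ContDiff ℝ 3 (R0 k) :=
  Real.contDiff_exp.comp (contDiff_const.mul contDiff_id).neg

lemma contDiff_u0 : ContDiff ℝ 3 (u0 k) :=
  (contDiff_R0 k).add (((chi_contDiff.of_le (by exact_mod_cast (ENat.natCast_lt_of_coe_top_le_withTop le_rfl 3).le)).mul
    ((contDiff_E k 1).sub (contDiff_R0 k))))


lemma exp_le_three {t : ℝ} (ht : t ≤ 1) : Real.exp t ≤ 3 :=
  le_trans (Real.exp_le_exp.mpr ht)
    (le_of_lt (lt_trans Real.exp_one_lt_d9 (by norm_num)))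

lemma abs_E_le (c : ℂ) (x : ℝ) : |E k c x| ≤ ‖c‖ * Real.exp (k*x/2) := by
  have h1 : |E k c x| ≤ ‖c * Complex.exp (lam k * x)‖ := Complex.abs_re_le_norm _
  rwa [norm_mul, Complex.norm_exp, lam_mul_re] at h1

lemma abs_lam (hk : 0 ≤ k) : ‖lam k‖ = k := by
  rw [lam, norm_mul, ca_abs, Complex.norm_real, Real.norm_eq_abs, abs_of_nonneg hk, mul_one]

section bounds
variable (hk0 : 0 < k) (hk1 : k ≤ 1) {x : ℝ} (hx : |x| ≤ 1)
include hk0 hk1 hx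

lemma exp_E_le : Real.exp (k*x/2) ≤ 3 := by
  apply exp_le_three
  nlinarith [abs_le.mp hx]

lemma R0_le : R0 k x ≤ 3 := by
  apply exp_le_three
  nlinarith [abs_le.mp hx]

omit hk0 in
lemma kx_le_one : k * |x| ≤ 1 := by
  nlinarith [mul_le_mul hk1 hx (abs_nonneg x) zero_le_one]

lemma R0_sub_one : |R0 k x - 1| ≤ 2 * k := by
  have harg : |(-(k * x))| ≤ 1 := by
    rw [abs_neg, abs_mul, abs_of_nonneg hk0.le]; exact kx_le_one k hk1 hx
  have h := Real.abs_exp_sub_one_le harg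
  rw [abs_neg, abs_mul, abs_of_nonneg hk0.le] at h
  rw [R0]
  refine le_trans h ?_
  nlinarith [kx_le_one k hk1 hx, abs_nonneg x, abs_le.mp hx]

lemma D0_bound : |D0 k x| ≤ 4*k := by
  have h1 : E k 1 x - 1 = (Complex.exp (lam k * x) - 1).re := by simp [E]
  have h2 : |E k 1 x - 1| ≤ 2 * k := by
    rw [h1]
    calc |(Complex.exp (lam k * x) - 1).re| ≤ ‖Complex.exp (lam k * x) - 1‖ :=
          Complex.abs_re_le_norm _
      _ ≤ 2 * ‖lam k * x‖ := by
          apply Complex.norm_exp_sub_one_le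
          rw [abs_lam_mul k x hk0.le]
          exact kx_le_one k hk1 hx
      _ ≤ 2 * k := by
          rw [abs_lam_mul k x hk0.le]
          nlinarith [abs_nonneg x, abs_le.mp hx]
  have h3 := R0_sub_one k hk0 hk1 hx
  have he : D0 k x = (E k 1 x - 1) - (R0 k x - 1) := by rw [D0]; ring
  rw [he, sub_eq_add_neg]
  refine le_trans (abs_add_le _ _) ?_
  rw [abs_neg]
  linarith

lemma D1_bound : |D1 k x| ≤ 6*k := by
  have h1 : |E k (lam k) x| ≤ 3 * k := by
    have h := abs_E_le k (lam k) x
    rw [abs_lam k hk0.le] at h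
    nlinarith [exp_E_le k hk0 hk1 hx, Real.exp_pos (k*x/2)]
  have h2 : |k * R0 k x| ≤ 3 * k := by
    rw [abs_mul, abs_of_nonneg hk0.le, R0, abs_of_nonneg (Real.exp_nonneg _)]
    have hR := R0_le k hk0 hk1 hx
    rw [R0] at hR
    nlinarith [Real.exp_pos (-(k*x))]
  refine le_trans (abs_add_le _ _) ?_
  linarith

lemma D2_bound : |D2 k x| ≤ 6*k := by
  have h1 : |E k (lam k ^ 2) x| ≤ 3 * k := by
    have h := abs_E_le k (lam k ^ 2) x
    rw [norm_pow, abs_lam k hk0.le] at h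
    nlinarith [exp_E_le k hk0 hk1 hx, Real.exp_pos (k*x/2), sq_nonneg k]
  have h2 : |k^2 * R0 k x| ≤ 3 * k := by
    rw [abs_mul, abs_of_nonneg (sq_nonneg k), R0, abs_of_nonneg (Real.exp_nonneg _)]
    have hR := R0_le k hk0 hk1 hx
    rw [R0] at hR
    nlinarith [Real.exp_pos (-(k*x)), sq_nonneg k]
  rw [D2, sub_eq_add_neg]
  refine le_trans (abs_add_le _ _) ?_
  rw [abs_neg]
  linarith

lemma u0_near_one : |u0 k x - 1| ≤ 6*k := by
  have h3 := R0_sub_one k hk0 hk1 hx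
  have h4 : |chi x * D0 k x| ≤ 4 * k := by
    rw [abs_mul, abs_of_nonneg (chi_nonneg x)]
    have hD := D0_bound k hk0 hk1 hx
    nlinarith [chi_nonneg x, chi_le_one x, abs_nonneg (D0 k x)]
  have he : u0 k x - 1 = (R0 k x - 1) + chi x * D0 k x := by rw [u0]; ring
  rw [he]
  refine le_trans (abs_add_le _ _) ?_
  linarith

end bounds

lemma u0_eq_right {x : ℝ} (hx : (1:ℝ)/2 ≤ x) : u0 k x = R0 k x := by
  rw [u0, chi_eq_zero hx]; ring

lemma u0_eq_left {x : ℝ} (hx : x ≤ -(1/2)) : u0 k x = E k 1 x := by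
  rw [u0, chi_eq_one hx, D0]; ring


lemma exp_sq (t : ℝ) : (Real.exp t)^2 = Real.exp (2*t) := by
  rw [sq, ← Real.exp_add]; ring_nf

lemma sq_u0_le (hk0 : 0 < k) (hk1 : k ≤ 1) (x : ℝ) :
    (u0 k x)^2 ≤ 150 * Real.exp (-(k * |x|)) := by
  rcases le_or_gt ((1:ℝ)/2) x with h | h
  · rw [u0_eq_right k h, R0]
    have hx0 : 0 ≤ x := le_trans (by norm_num) h
    rw [abs_of_nonneg hx0]
    have h1 : Real.exp (-(k*x)) ≤ 1 := by
      rw [show (1:ℝ) = Real.exp 0 by rw [Real.exp_zero]]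
      exact Real.exp_le_exp.mpr (by nlinarith)
    nlinarith [Real.exp_pos (-(k*x))]
  rcases le_or_gt x (-(1/2)) with h' | h'
  · rw [u0_eq_left k h']
    have habs := abs_E_le k 1 x
    rw [norm_one, one_mul] at habs
    have hx0 : x < 0 := lt_of_le_of_lt h' (by norm_num)
    rw [abs_of_neg hx0, show -(k * -x) = 2*(k*x/2) by ring, ← exp_sq]
    have h2 : (E k 1 x)^2 ≤ (Real.exp (k*x/2))^2 := by
      rcases abs_le.mp habs with ⟨ha, hb⟩
      exact sq_le_sq' ha hb
    nlinarith [sq_nonneg (Real.exp (k*x/2))]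
  · have hx1 : |x| ≤ 1 := by
      rw [abs_le]; constructor <;> linarith
    have h1 := u0_near_one k hk0 hk1 hx1
    have h2 : (u0 k x)^2 ≤ 49 := by
      rcases abs_le.mp h1 with ⟨ha, hb⟩
      nlinarith
    have h4 : Real.exp (-1) ≤ Real.exp (-(k * |x|)) :=
      Real.exp_le_exp.mpr (by nlinarith [kx_le_one k hk1 hx1])
    have h5 : (1:ℝ)/3 ≤ Real.exp (-1) := by
      rw [Real.exp_neg]
      have h6 := exp_le_three (le_refl (1:ℝ))
      have h7 := Real.exp_pos 1
      rw [div_le_iff₀ (by norm_num : (0:ℝ) < 3), inv_mul_eq_div, le_div_iff₀ h7]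
      linarith
    nlinarith

lemma integrable_exp_neg_abs (hk : 0 < k) :
    Integrable (fun x : ℝ => Real.exp (-(k * |x|))) := by
  have hIoi : IntegrableOn (fun x : ℝ => Real.exp (-(k * |x|))) (Ioi 0) := by
    refine (exp_neg_integrableOn_Ioi 0 hk).congr_fun ?_ measurableSet_Ioi
    intro y hy
    simp only []
    rw [abs_of_pos hy]
    ring_nf
  rw [← integrableOn_univ, ← Iio_union_Ici (a := (0:ℝ)), integrableOn_union,
    integrableOn_Ici_iff_integrableOn_Ioi]
  constructor
  · rw [← (Measure.measurePreserving_neg (volume : Measure ℝ)).integrableOn_comp_preimage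
      (Homeomorph.neg ℝ).measurableEmbedding]
    simp only [Function.comp_def, abs_neg, neg_preimage, neg_Iio, neg_zero]
    exact hIoi
  · exact hIoi


lemma continuous_D0 : Continuous (D0 k) := ((contDiff_E k 1).sub (contDiff_R0 k)).continuous

lemma continuous_D1 : Continuous (D1 k) :=
  (contDiff_E k (lam k)).continuous.add (continuous_const.mul (contDiff_R0 k).continuous)

lemma continuous_D2 : Continuous (D2 k) :=
  (contDiff_E k (lam k ^ 2)).continuous.sub (continuous_const.mul (contDiff_R0 k).continuous)

lemma continuous_W : Continuous (W k) :=
  ((chi3_contDiff.continuous.mul (continuous_D0 k)).add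
    (continuous_const.mul (chi2_contDiff.continuous.mul (continuous_D1 k)))).add
      (continuous_const.mul (chi1_contDiff.continuous.mul (continuous_D2 k)))

end
end S19

open Set

/-- arbitrarily small continuous potentials supported in `[−1,1]` produce
a nonzero eigenvalue `κ³` of `−d³/dx³ + V` arbitrarily close to zero: for every `ε > 0`
there are `0 < κ < ε`, a continuous `V` vanishing for `|x| ≥ 1` with `sup|V| < ε`, and a
nonzero square-integrable `C³` function `u` with `−u''' + V·u = κ³·u`. -/
theorem stmt19 :
    ∀ ε : ℝ, 0 < ε →
      ∃ κ : ℝ, 0 < κ ∧ κ < ε ∧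
        ∃ V : ℝ → ℝ, Continuous V ∧ (∀ x : ℝ, 1 ≤ |x| → V x = 0) ∧
          (∀ x : ℝ, |V x| < ε) ∧
          ∃ u : ℝ → ℝ, ContDiff ℝ 3 u ∧
            Integrable (fun x : ℝ => (u x) ^ 2) ∧ u ≠ 0 ∧
            ∀ x : ℝ, -(iteratedDeriv 3 u x) + V x * u x = κ ^ 3 * u x := by
  intro ε hε
  obtain ⟨M1, hM1⟩ := (isCompact_Icc (a := (-1:ℝ)) (b := 1)).exists_bound_of_continuousOn
    S19.chi1_contDiff.continuous.continuousOn
  obtain ⟨M2, hM2⟩ := (isCompact_Icc (a := (-1:ℝ)) (b := 1)).exists_bound_of_continuousOn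
    S19.chi2_contDiff.continuous.continuousOn
  obtain ⟨M3, hM3⟩ := (isCompact_Icc (a := (-1:ℝ)) (b := 1)).exists_bound_of_continuousOn
    S19.chi3_contDiff.continuous.continuousOn
  set M : ℝ := max 0 (max M1 (max M2 M3)) with hM
  have hM0 : 0 ≤ M := le_max_left _ _
  have hMb : ∀ y : ℝ, |y| ≤ 1 →
      |S19.chi1 y| ≤ M ∧ |S19.chi2 y| ≤ M ∧ |S19.chi3 y| ≤ M := by
    intro y hy
    have hyI : y ∈ Icc (-1:ℝ) 1 := by
      rcases abs_le.mp hy with ⟨ha, hb⟩; exact ⟨ha, hb⟩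
    have e1 := hM1 y hyI
    have e2 := hM2 y hyI
    have e3 := hM3 y hyI
    rw [Real.norm_eq_abs] at e1 e2 e3
    refine ⟨le_trans e1 ?_, le_trans e2 ?_, le_trans e3 ?_⟩
    · exact le_trans (le_max_left _ _) (le_max_right _ _)
    · exact le_trans (le_trans (le_max_left _ _) (le_max_right _ _)) (le_max_right _ _)
    · exact le_trans (le_trans (le_max_right _ _) (le_max_right _ _)) (le_max_right _ _)
  set k : ℝ := min (1/12 : ℝ) (ε / (80*M + 80)) with hkdef
  have hk0 : 0 < k := lt_min (by norm_num) (div_pos hε (by positivity))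
  have hk112 : k ≤ 1/12 := min_le_left _ _
  have hk1 : k ≤ 1 := le_trans hk112 (by norm_num)
  have hkε : k ≤ ε / (80*M+80) := min_le_right _ _
  have hkmul : (80*M+80) * k ≤ ε := by
    rw [← le_div_iff₀' (by positivity)]
    exact hkε
  have hkeps : k < ε := by nlinarith
  have h80 : 80*M*k < ε := by nlinarith
  refine ⟨k, hk0, hkeps, ?_⟩
  set u : ℝ → ℝ := S19.u0 k with hu
  set Wf : ℝ → ℝ := S19.W k with hWf
  set V : ℝ → ℝ := fun x => Wf x / u x with hV
  have humin : ∀ y : ℝ, |y| ≤ 1 → 1/2 ≤ u y := by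
    intro y hy
    rcases abs_le.mp (S19.u0_near_one k hk0 hk1 hy) with ⟨ha, hb⟩
    have : u y = S19.u0 k y := rfl
    linarith
  have hWz : ∀ y : ℝ, 1/2 < |y| → Wf y = 0 := by
    intro y hy
    obtain ⟨h1, h2, h3⟩ := S19.chi_derivs_zero hy
    simp [hWf, S19.W, h1, h2, h3]
  have hWb : ∀ y : ℝ, |y| ≤ 1 → |Wf y| ≤ 40*M*k := by
    intro y hy
    obtain ⟨c1, c2, c3⟩ := hMb y hy
    have d0 := S19.D0_bound k hk0 hk1 hy
    have d1 := S19.D1_bound k hk0 hk1 hy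
    have d2 := S19.D2_bound k hk0 hk1 hy
    have e1 : |S19.chi3 y * S19.D0 k y| ≤ M * (4*k) := by
      rw [abs_mul]
      exact mul_le_mul c3 d0 (abs_nonneg _) hM0
    have e2 : |3*(S19.chi2 y * S19.D1 k y)| ≤ 3 * (M * (6*k)) := by
      rw [abs_mul, abs_mul]
      have : |(3:ℝ)| = 3 := by norm_num
      rw [this]
      have := mul_le_mul c2 d1 (abs_nonneg _) hM0
      nlinarith [abs_nonneg (S19.chi2 y), abs_nonneg (S19.D1 k y)]
    have e3 : |3*(S19.chi1 y * S19.D2 k y)| ≤ 3 * (M * (6*k)) := by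
      rw [abs_mul, abs_mul]
      have : |(3:ℝ)| = 3 := by norm_num
      rw [this]
      have := mul_le_mul c1 d2 (abs_nonneg _) hM0
      nlinarith [abs_nonneg (S19.chi1 y), abs_nonneg (S19.D2 k y)]
    have htri : |Wf y| ≤ |S19.chi3 y * S19.D0 k y| + |3*(S19.chi2 y * S19.D1 k y)|
        + |3*(S19.chi1 y * S19.D2 k y)| := by
      show |S19.W k y| ≤ _
      rw [S19.W]
      refine le_trans (abs_add_le _ _) ?_
      linarith [abs_add_le (S19.chi3 y * S19.D0 k y) (3*(S19.chi2 y * S19.D1 k y))]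
    linarith
  have hu_cont : Continuous u := (S19.contDiff_u0 k).continuous
  have hVcont : Continuous V := by
    rw [continuous_iff_continuousAt]
    intro y
    rcases lt_or_ge |y| 1 with hy | hy
    · have hne : u y ≠ 0 := by have := humin y hy.le; linarith
      exact ((S19.continuous_W k).continuousAt).div hu_cont.continuousAt hne
    · have hopen : IsOpen {z : ℝ | 1/2 < |z|} := isOpen_lt continuous_const continuous_abs
      have hmem : y ∈ {z : ℝ | 1/2 < |z|} := by
        simp only [mem_setOf_eq]; linarith
      have hev : V =ᶠ[nhds y] (fun _ => (0:ℝ)) :=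
        Filter.eventuallyEq_of_mem (hopen.mem_nhds hmem)
          (fun z hz => by simp only [hV]; rw [hWz z hz, zero_div])
      exact ContinuousAt.congr continuousAt_const hev.symm
  refine ⟨V, hVcont, ?_, ?_, u, S19.contDiff_u0 k, ?_, ?_, ?_⟩
  · intro x hx
    have : Wf x = 0 := hWz x (by linarith)
    simp only [hV]
    rw [this, zero_div]
  · intro x
    rcases le_or_gt |x| (1/2) with hx | hx
    · have hx1 : |x| ≤ 1 := by linarith
      have hub := humin x hx1
      have huabs : |u x| = u x := abs_of_nonneg (by linarith)
      have h2 : |V x| ≤ 2 * |Wf x| := by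
        simp only [hV]
        rw [abs_div, huabs, div_le_iff₀ (by linarith : (0:ℝ) < u x)]
        nlinarith [abs_nonneg (Wf x)]
      have := hWb x hx1
      linarith
    · have : V x = 0 := by
        simp only [hV]
        rw [hWz x hx, zero_div]
      rw [this]
      rw [abs_zero]
      exact hε
  · refine Integrable.mono' ((S19.integrable_exp_neg_abs k hk0).const_mul 150)
      ((hu_cont.mul hu_cont).congr ?_).aestronglyMeasurable ?_
    · intro x; rw [← sq]; rfl
    · refine Filter.Eventually.of_forall fun x => ?_
      rw [Real.norm_eq_abs, abs_of_nonneg (sq_nonneg _)]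
      exact S19.sq_u0_le k hk0 hk1 x
  · intro h
    have h0 := humin 0 (by norm_num)
    rw [h] at h0
    simp at h0
    linarith
  · intro x
    have hit : iteratedDeriv 3 u x = S19.u3 k x := by rw [hu, S19.iter3]
    have hu3 : S19.u3 k x = Wf x - k^3 * u x := by
      simp only [hu, hWf, S19.u3, S19.W, S19.u0]
      ring
    have hVu : V x * u x = Wf x := by
      rcases eq_or_ne (u x) 0 with h0 | h0
      · have hx1 : ¬ |x| ≤ 1 := fun hc => by
          have := humin x hc; rw [h0] at this; linarith
        have hW0 : Wf x = 0 := hWz x (by push_neg at hx1; linarith)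
        rw [h0, hW0]
        simp
      · simp only [hV]
        field_simp
    rw [hit, hu3]
    linarith [hVu]
end
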